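/- arXiv:1904.13056 — 8 statements merged into one kernel-verified Lean document; each statement's English description precedes it below -/
import Mathlib

section
/- (Vazirani's Lemma) Let ε > 0 and let Z be a random variable taking values in {0,1}^m. If for every non-empty set S ⊆ [m] it holds that bias(⊕_{i∈S} Z_i) ≤ ε·(2m)^{-|S|}, then for every z ∈ {0,1}^m, (1-ε)·2^{-m} ≤ Pr[Z = z] ≤ (1+ε)·2^{-m}. -/
open Finset
open scoped Classical

/-- Vazirani's lemma: small biases of all XORs imply near-uniformity. -/
theorem stmt_1 (m : ℕ) (ε : ℝ) (hε : 0 < ε) (μ : (Fin m → Bool) → ℝ)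
    (hnn : ∀ z, 0 ≤ μ z) (hsum : ∑ z, μ z = 1)
    (hbias : ∀ S : Finset (Fin m), S.Nonempty →
      |(∑ z ∈ univ.filter (fun z => (S.filter (fun i => z i = true)).card % 2 = 0), μ z)
        - ∑ z ∈ univ.filter (fun z => (S.filter (fun i => z i = true)).card % 2 = 1), μ z|
        ≤ ε * ((2 * m : ℝ)) ^ (-(S.card : ℤ))) :
    ∀ z, (1 - ε) * (1 / 2 ^ m) ≤ μ z ∧ μ z ≤ (1 + ε) * (1 / 2 ^ m) := by
  intro z
  set χ : Finset (Fin m) → (Fin m → Bool) → ℝ :=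
    fun S w => ∏ i ∈ S, (if w i then (-1:ℝ) else 1) with hχdef
  -- χ as a sign determined by parity
  have hχpow : ∀ (S : Finset (Fin m)) (w : Fin m → Bool),
      χ S w = (-1:ℝ) ^ (S.filter (fun i => w i = true)).card := by
    intro S w
    rw [hχdef]
    simp only
    rw [Finset.prod_ite (fun _ => (-1:ℝ)) (fun _ => (1:ℝ))]
    simp
  have hχabs : ∀ S w, |χ S w| = 1 := by
    intro S w; rw [hχpow]; rw [abs_pow, abs_neg, abs_one, one_pow]
  -- orthogonality
  have orth : ∀ w, ∑ S : Finset (Fin m), χ S z * χ S w = if w = z then (2:ℝ)^m else 0 := by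
    intro w
    have h1 : ∀ S : Finset (Fin m), χ S z * χ S w
        = ∏ i ∈ S, ((if z i then (-1:ℝ) else 1) * (if w i then (-1:ℝ) else 1)) := by
      intro S; rw [hχdef]; exact (Finset.prod_mul_distrib).symm
    have h2 := Fintype.prod_add
      (fun i => (if z i then (-1:ℝ) else 1) * (if w i then (-1:ℝ) else 1)) (fun _ => (1:ℝ))
    simp only [Finset.prod_const_one, mul_one] at h2
    rw [Finset.sum_congr rfl (fun S _ => h1 S), ← h2]
    by_cases h : w = z
    · subst h
      rw [if_pos rfl]
      have : ∀ i : Fin m, ((if w i then (-1:ℝ) else 1) * (if w i then (-1:ℝ) else 1) + 1) = 2 := by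
        intro i; by_cases hw : w i <;> simp [hw] <;> norm_num
      rw [Finset.prod_congr rfl (fun i _ => this i)]
      simp
    · rw [if_neg h]
      obtain ⟨i, hi⟩ : ∃ i, z i ≠ w i := by
        by_contra hc; push_neg at hc; exact h (funext fun i => (hc i).symm)
      apply Finset.prod_eq_zero (Finset.mem_univ i)
      by_cases hz : z i <;> by_cases hw : w i <;> simp_all
  -- Fourier coefficients
  set F : Finset (Fin m) → ℝ := fun S => ∑ w, μ w * χ S w with hFdef
  -- expansion of μ z
  have expand : ∑ S : Finset (Fin m), χ S z * F S = (2:ℝ)^m * μ z := by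
    calc ∑ S : Finset (Fin m), χ S z * F S
        = ∑ S : Finset (Fin m), ∑ w, μ w * (χ S z * χ S w) := by
          apply Finset.sum_congr rfl; intro S _
          rw [hFdef]; simp only [Finset.mul_sum]
          apply Finset.sum_congr rfl; intro w _; ring
      _ = ∑ w, ∑ S : Finset (Fin m), μ w * (χ S z * χ S w) := Finset.sum_comm
      _ = ∑ w, μ w * (if w = z then (2:ℝ)^m else 0) := by
          apply Finset.sum_congr rfl; intro w _
          rw [← Finset.mul_sum, orth w]
      _ = (2:ℝ)^m * μ z := by
          rw [Finset.sum_congr rfl (fun w _ => by rw [mul_ite, mul_zero])]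
          rw [Finset.sum_ite_eq' univ z (fun w => μ w * (2:ℝ)^m)]
          simp [mul_comm]
  -- F of the empty set is 1
  have hF0 : F ∅ = 1 := by
    rw [hFdef]; simp only [hχdef]; simp [hsum]
  -- bias bound on F
  have hFbias : ∀ S : Finset (Fin m), S.Nonempty → |F S| ≤ ε * ((2 * m : ℝ)) ^ (-(S.card : ℤ)) := by
    intro S hS
    have key : F S = (∑ w ∈ univ.filter (fun w => (S.filter (fun i => w i = true)).card % 2 = 0), μ w)
        - ∑ w ∈ univ.filter (fun w => (S.filter (fun i => w i = true)).card % 2 = 1), μ w := by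
      rw [hFdef]
      simp only
      rw [← Finset.sum_filter_add_sum_filter_not univ
        (fun w => (S.filter (fun i => w i = true)).card % 2 = 0) (fun w => μ w * χ S w)]
      have e1 : ∀ w ∈ univ.filter (fun w => (S.filter (fun i => w i = true)).card % 2 = 0),
          μ w * χ S w = μ w := by
        intro w hw
        rw [Finset.mem_filter] at hw
        rw [hχpow, (Nat.even_iff.mpr hw.2).neg_one_pow, mul_one]
      have e2 : ∀ w ∈ univ.filter (fun w => ¬(S.filter (fun i => w i = true)).card % 2 = 0),
          μ w * χ S w = -μ w := by
        intro w hw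
        rw [Finset.mem_filter] at hw
        have : Odd (S.filter (fun i => w i = true)).card :=
          Nat.odd_iff.mpr (Nat.mod_two_ne_zero.mp hw.2)
        rw [hχpow, this.neg_one_pow, mul_neg, mul_one]
      have hfil : ((univ : Finset (Fin m → Bool)).filter
            (fun w => ¬(S.filter (fun i => w i = true)).card % 2 = 0))
          = (univ : Finset (Fin m → Bool)).filter
            (fun w => (S.filter (fun i => w i = true)).card % 2 = 1) := by
        apply Finset.filter_congr
        intro w _
        simp [Nat.mod_two_ne_zero]
      rw [Finset.sum_congr rfl e1, Finset.sum_congr rfl e2, hfil, Finset.sum_neg_distrib,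
        ← sub_eq_add_neg]
    rw [key]
    exact hbias S hS
  -- split off the empty set
  have hsplit : (2:ℝ)^m * μ z - 1 = ∑ S ∈ (univ : Finset (Finset (Fin m))).erase ∅, χ S z * F S := by
    have hempty : χ ∅ z * F ∅ = 1 := by
      rw [hF0, mul_one, hχpow]; simp
    rw [← expand, ← Finset.add_sum_erase _ (fun S => χ S z * F S)
      (Finset.mem_univ (∅ : Finset (Fin m))), hempty]
    ring
  -- bound on the tail sum
  have habs : |(2:ℝ)^m * μ z - 1| ≤ ε := by
    rw [hsplit]
    calc |∑ S ∈ (univ : Finset (Finset (Fin m))).erase ∅, χ S z * F S|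
        ≤ ∑ S ∈ (univ : Finset (Finset (Fin m))).erase ∅, |χ S z * F S| :=
          Finset.abs_sum_le_sum_abs _ _
      _ ≤ ∑ S ∈ (univ : Finset (Finset (Fin m))).erase ∅, ε * ((2 * m : ℝ)) ^ (-(S.card : ℤ)) := by
          apply Finset.sum_le_sum
          intro S hS
          rw [abs_mul, hχabs, one_mul]
          exact hFbias S (Finset.nonempty_of_ne_empty (Finset.ne_of_mem_erase hS))
      _ ≤ ε := by
          rcases Nat.eq_zero_or_pos m with hm | hm
          · subst hm
            have : (univ : Finset (Finset (Fin 0))).erase ∅ = ∅ := by decide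
            rw [this]; simp; positivity
          · rw [← Finset.mul_sum]
            have key : ∑ S ∈ (univ : Finset (Finset (Fin m))).erase ∅,
                ((2 * m : ℝ)) ^ (-(S.card : ℤ)) ≤ 1 := by
              have hmpos : (0:ℝ) < 2 * m := by positivity
              have hterm : ∀ S : Finset (Fin m),
                  ((2 * m : ℝ)) ^ (-(S.card : ℤ)) = ∏ _i ∈ S, (1 / (2 * m : ℝ)) := by
                intro S
                rw [Finset.prod_const, zpow_neg, zpow_natCast, one_div, inv_pow]
              have hall : ∑ S : Finset (Fin m), ((2 * m : ℝ)) ^ (-(S.card : ℤ))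
                  = (1 / (2 * m : ℝ) + 1) ^ m := by
                rw [Finset.sum_congr rfl (fun S _ => hterm S)]
                have h2 := Fintype.prod_add (fun _ : Fin m => (1 / (2 * m : ℝ))) (fun _ => (1:ℝ))
                simp only [Finset.prod_const_one, mul_one] at h2
                rw [← h2, Finset.prod_const, Finset.card_univ, Fintype.card_fin]
              have hsplit2 : ∑ S : Finset (Fin m), ((2 * m : ℝ)) ^ (-(S.card : ℤ))
                  = 1 + ∑ S ∈ (univ : Finset (Finset (Fin m))).erase ∅,
                      ((2 * m : ℝ)) ^ (-(S.card : ℤ)) := by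
                rw [← Finset.add_sum_erase _ _ (Finset.mem_univ (∅ : Finset (Fin m)))]
                simp
              have hexp : (1 / (2 * m : ℝ) + 1) ^ m ≤ 2 := by
                have h1 : 1 / (2 * m : ℝ) + 1 ≤ Real.exp (1 / (2 * m : ℝ)) :=
                  Real.add_one_le_exp _
                have h0 : (0:ℝ) ≤ 1 / (2 * m : ℝ) + 1 := by positivity
                have h2 : (1 / (2 * m : ℝ) + 1) ^ m ≤ Real.exp (1 / (2 * m : ℝ)) ^ m :=
                  pow_le_pow_left₀ h0 h1 m
                rw [← Real.exp_nat_mul] at h2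
                have hm' : (m : ℝ) * (1 / (2 * m : ℝ)) = 1 / 2 := by
                  field_simp
                rw [hm'] at h2
                have hhalf : Real.exp (1/2 : ℝ) ≤ 2 := by
                  nlinarith [Real.exp_one_lt_d9, Real.exp_pos (1/2 : ℝ),
                    Real.exp_add (1/2 : ℝ) (1/2 : ℝ), Real.exp_pos (1:ℝ)]
                linarith
              linarith [hsplit2.symm.trans hall, hexp]
            calc ε * ∑ S ∈ (univ : Finset (Finset (Fin m))).erase ∅,
                ((2 * m : ℝ)) ^ (-(S.card : ℤ)) ≤ ε * 1 := by
                  exact mul_le_mul_of_nonneg_left key (le_of_lt hε)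
              _ = ε := mul_one ε
  -- conclude
  have h2m : (0:ℝ) < 2 ^ m := by positivity
  rw [abs_le] at habs
  constructor
  · rw [mul_one_div, div_le_iff₀ h2m]
    nlinarith [habs.1]
  · rw [mul_one_div, le_div_iff₀ h2m]
    nlinarith [habs.2]
end

section
/- (Min-entropy version of Vazirani's Lemma) Let t ≥ 1 be an integer and let Z be a random variable taking values in {0,1}^m. If for every set S ⊆ [m] with |S| ≥ t it holds that bias(⊕_{i∈S} Z_i) ≤ (2m)^{-|S|}, then the min-entropy of Z is at least m - t·log₂(m) - 1, i.e., for every z ∈ {0,1}^m, Pr[Z = z] ≤ 2^{-(m - t·log₂ m - 1)}. -/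
open Finset
open scoped Classical

noncomputable def chi {m : ℕ} (S : Finset (Fin m)) (x : Fin m → Bool) : ℝ :=
  ∏ i ∈ S, (if x i = true then (-1 : ℝ) else 1)

lemma chi_eq {m : ℕ} (S : Finset (Fin m)) (x : Fin m → Bool) :
    chi S x = (-1 : ℝ) ^ (S.filter (fun i => x i = true)).card := by
  unfold chi
  rw [← Finset.prod_filter_mul_prod_filter_not S (fun i => x i = true)]
  rw [Finset.prod_congr rfl (g := fun _ => (-1:ℝ)) (fun i hi => by
      simp [(Finset.mem_filter.1 hi).2]),
    Finset.prod_const,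
    Finset.prod_congr rfl (g := fun _ => (1:ℝ)) (fun i hi => by
      simp [(Finset.mem_filter.1 hi).2]),
    Finset.prod_const, one_pow, mul_one]

lemma abs_chi {m : ℕ} (S : Finset (Fin m)) (x : Fin m → Bool) : |chi S x| = 1 := by
  rw [chi_eq, abs_pow, abs_neg, abs_one, one_pow]

lemma sum_chi_mul {m : ℕ} (x z : Fin m → Bool) :
    ∑ S : Finset (Fin m), chi S x * chi S z = if x = z then (2:ℝ)^m else 0 := by
  set g : Fin m → ℝ := fun i => if x i = z i then (1:ℝ) else -1 with hg
  have key : ∀ S : Finset (Fin m), chi S x * chi S z = ∏ i ∈ S, g i := by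
    intro S
    unfold chi
    rw [← Finset.prod_mul_distrib]
    refine Finset.prod_congr rfl fun i _ => ?_
    cases hx : x i <;> cases hz : z i <;> simp [hg, hx, hz]
  have step : ∑ S : Finset (Fin m), chi S x * chi S z = ∏ i : Fin m, (g i + 1) := by
    calc ∑ S : Finset (Fin m), chi S x * chi S z
        = ∑ S ∈ (Finset.univ : Finset (Fin m)).powerset,
            (∏ i ∈ S, g i) * ∏ i ∈ Finset.univ \ S, (1:ℝ) := by
          rw [Finset.powerset_univ]
          exact Finset.sum_congr rfl fun S _ => by
            rw [key S, Finset.prod_const_one, mul_one]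
      _ = ∏ i : Fin m, (g i + 1) := (Finset.prod_add g (fun _ => 1) Finset.univ).symm
  rw [step]
  by_cases h : x = z
  · subst h
    have : ∀ i : Fin m, g i + 1 = 2 := fun i => by norm_num [hg]
    rw [Finset.prod_congr rfl fun i _ => this i, Finset.prod_const]
    simp [Finset.card_univ]
  · rw [if_neg h]
    obtain ⟨i, hi⟩ : ∃ i, x i ≠ z i := Function.ne_iff.1 h
    exact Finset.prod_eq_zero (Finset.mem_univ i) (by simp [hg, hi])

/-- Min-entropy version of Vazirani's lemma. -/
theorem stmt_2 (m t : ℕ) (ht : 1 ≤ t) (μ : (Fin m → Bool) → ℝ)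
    (hnn : ∀ z, 0 ≤ μ z) (hsum : ∑ z, μ z = 1)
    (hbias : ∀ S : Finset (Fin m), t ≤ S.card →
      |(∑ z ∈ univ.filter (fun z => (S.filter (fun i => z i = true)).card % 2 = 0), μ z)
        - ∑ z ∈ univ.filter (fun z => (S.filter (fun i => z i = true)).card % 2 = 1), μ z|
        ≤ ((2 * m : ℝ)) ^ (-(S.card : ℤ))) :
    ∀ z, μ z ≤ (2 : ℝ) ^ (-((m : ℝ) - t * Real.logb 2 m - 1)) := by
  intro z
  have hμ1 : μ z ≤ 1 := by
    rw [← hsum]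
    exact Finset.single_le_sum (fun x _ => hnn x) (Finset.mem_univ z)
  rcases lt_or_ge m 2 with hm | hm
  · interval_cases m
    · have h2 : (2:ℝ) ^ (-((0 : ℕ) - (t:ℝ) * Real.logb 2 (0:ℕ) - 1)) = 2 := by
        norm_num [Real.logb, Real.log_zero]
      rw [h2]; linarith
    · have h2 : (2:ℝ) ^ (-((1 : ℕ) - (t:ℝ) * Real.logb 2 (1:ℕ) - 1)) = 1 := by
        norm_num
      rw [h2]; exact hμ1
  have hm0 : (0:ℝ) < m := by positivity
  set b : Finset (Fin m) → ℝ := fun S => ∑ x, μ x * chi S x with hb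
  have hbS : ∀ S : Finset (Fin m), b S =
      (∑ x ∈ univ.filter (fun x => (S.filter (fun i => x i = true)).card % 2 = 0), μ x)
        - ∑ x ∈ univ.filter (fun x => (S.filter (fun i => x i = true)).card % 2 = 1), μ x := by
    intro S
    rw [hb]
    simp only
    rw [← Finset.sum_filter_add_sum_filter_not Finset.univ
      (fun x => (S.filter (fun i => x i = true)).card % 2 = 0) (fun x => μ x * chi S x)]
    have h1 : ∀ x ∈ univ.filter (fun x => (S.filter (fun i => x i = true)).card % 2 = 0),
        μ x * chi S x = μ x := by
      intro x hx
      rw [chi_eq, (Nat.even_iff.2 (Finset.mem_filter.1 hx).2).neg_one_pow, mul_one]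
    have h2 : ∀ x ∈ univ.filter (fun x => ¬ (S.filter (fun i => x i = true)).card % 2 = 0),
        μ x * chi S x = -μ x := by
      intro x hx
      have hodd : Odd (S.filter (fun i => x i = true)).card :=
        Nat.odd_iff.2 (Nat.mod_two_ne_zero.1 (Finset.mem_filter.1 hx).2)
      rw [chi_eq, hodd.neg_one_pow, mul_neg_one]
    rw [Finset.sum_congr rfl h1, Finset.sum_congr rfl h2, Finset.sum_neg_distrib,
      ← sub_eq_add_neg]
    congr 2
    ext x
    simp [Nat.mod_two_ne_zero]
  have hb1 : ∀ S : Finset (Fin m), |b S| ≤ 1 := by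
    intro S
    calc |b S| ≤ ∑ x, |μ x * chi S x| := Finset.abs_sum_le_sum_abs _ _
      _ = ∑ x, μ x := by
          refine Finset.sum_congr rfl fun x _ => ?_
          rw [abs_mul, abs_chi, mul_one, abs_of_nonneg (hnn x)]
      _ = 1 := hsum
  have hinv : (2:ℝ)^m * μ z = ∑ S : Finset (Fin m), chi S z * b S := by
    have : ∑ S : Finset (Fin m), chi S z * b S
        = ∑ x, μ x * (if x = z then (2:ℝ)^m else 0) := by
      calc ∑ S : Finset (Fin m), chi S z * b S
          = ∑ S : Finset (Fin m), ∑ x, μ x * (chi S x * chi S z) := by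
            refine Finset.sum_congr rfl fun S _ => ?_
            rw [hb]; simp only
            rw [Finset.mul_sum]
            exact Finset.sum_congr rfl fun x _ => by ring
        _ = ∑ x, ∑ S : Finset (Fin m), μ x * (chi S x * chi S z) := Finset.sum_comm
        _ = ∑ x, μ x * (if x = z then (2:ℝ)^m else 0) := by
            refine Finset.sum_congr rfl fun x _ => ?_
            rw [← Finset.mul_sum, sum_chi_mul]
    rw [this]
    simp [mul_ite, Finset.sum_ite_eq', mul_comm]
  -- bound on the sum of |b S|
  have hbound : ∑ S : Finset (Fin m), |b S| ≤ 2 * (m:ℝ)^t := by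
    have hsplit : ∑ S : Finset (Fin m), |b S|
        = ∑ j ∈ Finset.range (m + 1), ∑ S ∈ Finset.powersetCard j (Finset.univ : Finset (Fin m)), |b S| := by
      rw [← Finset.powerset_univ, Finset.sum_powerset]
      simp [Finset.card_univ]
    rw [hsplit]
    have hterm : ∀ j ∈ Finset.range (m + 1),
        ∑ S ∈ Finset.powersetCard j (Finset.univ : Finset (Fin m)), |b S|
          ≤ (if j < t then (m:ℝ)^j else (1/2:ℝ)^j) := by
      intro j hj
      by_cases hjt : j < t
      · rw [if_pos hjt]
        calc ∑ S ∈ Finset.powersetCard j (Finset.univ : Finset (Fin m)), |b S|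
            ≤ ∑ S ∈ Finset.powersetCard j (Finset.univ : Finset (Fin m)), 1 :=
              Finset.sum_le_sum fun S _ => hb1 S
          _ = (m.choose j : ℝ) := by
              rw [Finset.sum_const, Finset.card_powersetCard, Finset.card_univ,
                Fintype.card_fin, nsmul_eq_mul, mul_one]
          _ ≤ ((m^j : ℕ) : ℝ) := by exact_mod_cast Nat.cast_le.2 (Nat.choose_le_pow m j)
          _ = (m:ℝ)^j := by push_cast; ring
      · rw [if_neg hjt]
        have hjt' : t ≤ j := Nat.le_of_not_lt hjt
        calc ∑ S ∈ Finset.powersetCard j (Finset.univ : Finset (Fin m)), |b S|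
            ≤ ∑ S ∈ Finset.powersetCard j (Finset.univ : Finset (Fin m)), ((2*m:ℝ))^(-(j:ℤ)) := by
              refine Finset.sum_le_sum fun S hS => ?_
              have hcard : S.card = j := Finset.mem_powersetCard_univ.1 hS
              have := hbias S (hcard ▸ hjt')
              rw [← hbS S] at this
              rw [hcard] at this
              exact this
          _ = (m.choose j : ℝ) * ((2*m:ℝ))^(-(j:ℤ)) := by
              rw [Finset.sum_const, Finset.card_powersetCard, Finset.card_univ,
                Fintype.card_fin, nsmul_eq_mul]
          _ ≤ (m:ℝ)^j * ((2*m:ℝ))^(-(j:ℤ)) := by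
              have h1 : (m.choose j : ℝ) ≤ (m:ℝ)^j := by
                exact_mod_cast Nat.cast_le.2 (Nat.choose_le_pow m j)
              have h2 : (0:ℝ) ≤ ((2*m:ℝ))^(-(j:ℤ)) := by positivity
              exact mul_le_mul_of_nonneg_right h1 h2
          _ = (1/2:ℝ)^j := by
              rw [zpow_neg, zpow_natCast, mul_pow]
              rw [div_pow, one_pow]
              rw [mul_inv]
              rw [eq_div_iff (by positivity)]
              field_simp
      
    calc ∑ j ∈ Finset.range (m + 1), ∑ S ∈ Finset.powersetCard j (Finset.univ : Finset (Fin m)), |b S|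
        ≤ ∑ j ∈ Finset.range (m + 1), (if j < t then (m:ℝ)^j else (1/2:ℝ)^j) :=
          Finset.sum_le_sum hterm
      _ = (∑ j ∈ (Finset.range (m + 1)).filter (· < t), (m:ℝ)^j)
          + ∑ j ∈ (Finset.range (m + 1)).filter (fun j => ¬ j < t), (1/2:ℝ)^j := by
          rw [Finset.sum_ite]
      _ ≤ ((m:ℝ)^t - 1) + 1 := by
          gcongr ?_ + ?_
          · calc ∑ j ∈ (Finset.range (m + 1)).filter (· < t), (m:ℝ)^j
                ≤ ∑ j ∈ Finset.range t, (m:ℝ)^j := by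
                  refine Finset.sum_le_sum_of_subset_of_nonneg ?_ (fun j _ _ => by positivity)
                  intro j hj
                  simp only [Finset.mem_filter, Finset.mem_range] at hj ⊢
                  exact hj.2
              _ = ((m:ℝ)^t - 1)/((m:ℝ) - 1) := geom_sum_eq (by
                  exact_mod_cast (by omega : m ≠ 1)) t
              _ ≤ (m:ℝ)^t - 1 := by
                  refine div_le_self ?_ (by linarith [show (2:ℝ) ≤ m by exact_mod_cast hm])
                  have : (1:ℝ) ≤ (m:ℝ)^t := one_le_pow₀ (by exact_mod_cast (by omega : 1 ≤ m) : (1:ℝ) ≤ (m:ℝ))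
                  linarith
          · calc ∑ j ∈ (Finset.range (m + 1)).filter (fun j => ¬ j < t), (1/2:ℝ)^j
                ≤ ∑ j ∈ Finset.Ico 1 (m+1), (1/2:ℝ)^j := by
                  refine Finset.sum_le_sum_of_subset_of_nonneg ?_ (fun j _ _ => by positivity)
                  intro j hj
                  simp only [Finset.mem_filter, Finset.mem_range, Finset.mem_Ico] at hj ⊢
                  omega
              _ = ((1/2:ℝ)^(m+1) - (1/2:ℝ)^1)/((1/2:ℝ) - 1) :=
                  geom_sum_Ico (by norm_num) (by omega)
              _ ≤ 1 := by
                  rw [div_le_iff_of_neg (by norm_num)]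
                  have : (0:ℝ) ≤ (1/2:ℝ)^(m+1) := by positivity
                  linarith
      _ = (m:ℝ)^t := by ring
      _ ≤ 2 * (m:ℝ)^t := by nlinarith [pow_pos hm0 t]
  -- now conclude
  have hmain : μ z ≤ 2 * (m:ℝ)^t / 2^m := by
    rw [le_div_iff₀ (by positivity : (0:ℝ) < 2^m)]
    calc μ z * 2^m = (2:ℝ)^m * μ z := by ring
      _ = ∑ S : Finset (Fin m), chi S z * b S := hinv
      _ ≤ |∑ S : Finset (Fin m), chi S z * b S| := le_abs_self _
      _ ≤ ∑ S : Finset (Fin m), |chi S z * b S| := Finset.abs_sum_le_sum_abs _ _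
      _ = ∑ S : Finset (Fin m), |b S| := by
          refine Finset.sum_congr rfl fun S _ => ?_
          rw [abs_mul, abs_chi, one_mul]
      _ ≤ 2 * (m:ℝ)^t := hbound
  have hR : (2 : ℝ) ^ (-((m : ℝ) - t * Real.logb 2 m - 1)) = 2 * (m:ℝ)^t / 2^m := by
    rw [show -((m : ℝ) - t * Real.logb 2 m - 1) = Real.logb 2 m * t + (1 - m) by ring]
    rw [Real.rpow_add (by norm_num : (0:ℝ) < 2), Real.rpow_mul (by norm_num : (0:ℝ) ≤ 2)]
    rw [Real.rpow_logb (by norm_num) (by norm_num) hm0]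
    rw [Real.rpow_natCast]
    rw [Real.rpow_sub (by norm_num : (0:ℝ) < 2), Real.rpow_one, Real.rpow_natCast]
    ring
  rw [hR]
  exact hmain
end

section
/- (Extractor property of low-discrepancy gadgets) Let Λ be a finite set, g : Λ × Λ → {0,1} a function with disc(g) ≤ |Λ|^{-η}, and let X, Y be independent random variables taking values in Λ with H_∞(X) + H_∞(Y) ≥ (2 - η + λ)·log₂|Λ|. Then bias(g(X,Y)) ≤ |Λ|^{-λ}. -/
open Finset
open scoped Classical

/-- Linear functional on box attains max at a vertex (indicator). -/
lemma key_aux {Λ : Type*} [Fintype Λ] (u f : Λ → ℝ) (p C : ℝ) (hp0 : 0 ≤ p)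
    (hu : ∀ x, 0 ≤ u x) (hup : ∀ x, u x ≤ p) (hC : 0 ≤ C)
    (hA : ∀ A : Finset Λ, |∑ x ∈ A, f x| ≤ C) :
    |∑ x, u x * f x| ≤ p * C := by
  have hsplit := Finset.sum_filter_add_sum_filter_not Finset.univ
    (fun x => 0 ≤ f x) (fun x => u x * f x)
  rw [abs_le]
  constructor
  · -- lower bound
    have h1 : ∑ x ∈ univ.filter (fun x => 0 ≤ f x), u x * f x ≥ 0 := by
      apply Finset.sum_nonneg
      intro x hx
      exact mul_nonneg (hu x) (Finset.mem_filter.mp hx).2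
    have h2 : ∑ x ∈ univ.filter (fun x => ¬ 0 ≤ f x), u x * f x ≥
        p * ∑ x ∈ univ.filter (fun x => ¬ 0 ≤ f x), f x := by
      rw [Finset.mul_sum]
      apply Finset.sum_le_sum
      intro x hx
      have hf : f x ≤ 0 := le_of_lt (not_le.mp (Finset.mem_filter.mp hx).2)
      nlinarith [hu x, hup x]
    have h3 : p * ∑ x ∈ univ.filter (fun x => ¬ 0 ≤ f x), f x ≥ p * (-C) := by
      apply mul_le_mul_of_nonneg_left _ hp0
      have := hA (univ.filter (fun x => ¬ 0 ≤ f x))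
      linarith [abs_le.mp this]
    nlinarith
  · have h1 : ∑ x ∈ univ.filter (fun x => ¬ 0 ≤ f x), u x * f x ≤ 0 := by
      apply Finset.sum_nonpos
      intro x hx
      have hf : f x ≤ 0 := le_of_lt (not_le.mp (Finset.mem_filter.mp hx).2)
      exact mul_nonpos_of_nonneg_of_nonpos (hu x) hf
    have h2 : ∑ x ∈ univ.filter (fun x => 0 ≤ f x), u x * f x ≤
        p * ∑ x ∈ univ.filter (fun x => 0 ≤ f x), f x := by
      rw [Finset.mul_sum]
      apply Finset.sum_le_sum
      intro x hx
      have hf : 0 ≤ f x := (Finset.mem_filter.mp hx).2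
      nlinarith [hu x, hup x]
    have h3 : p * ∑ x ∈ univ.filter (fun x => 0 ≤ f x), f x ≤ p * C := by
      apply mul_le_mul_of_nonneg_left _ hp0
      have := hA (univ.filter (fun x => 0 ≤ f x))
      linarith [abs_le.mp this]
    nlinarith

/-- Extractor property of low-discrepancy gadgets: if `disc(g) ≤ |Λ|^(-η)` and
`H_∞(X) + H_∞(Y) ≥ (2 - η + λ)·log₂|Λ|`, then `bias(g(X,Y)) ≤ |Λ|^(-λ)`. -/
theorem stmt_7 {Λ : Type*} [Fintype Λ] [Nonempty Λ] (η lam : ℝ) (hη : 0 < η) (hlam : 0 < lam)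
    (g : Λ → Λ → Bool)
    (hdisc : ∀ A B : Finset Λ,
      |(((A ×ˢ B).filter (fun p => g p.1 p.2 = false)).card : ℝ)
          - (((A ×ˢ B).filter (fun p => g p.1 p.2 = true)).card : ℝ)|
        / ((Fintype.card Λ : ℝ) ^ 2)
        ≤ (Fintype.card Λ : ℝ) ^ (-η))
    (μX μY : Λ → ℝ) (hX0 : ∀ x, 0 ≤ μX x) (hX1 : ∑ x, μX x = 1)
    (hY0 : ∀ y, 0 ≤ μY y) (hY1 : ∑ y, μY y = 1)
    (kX kY : ℝ) (hkX : ∀ x, μX x ≤ (2 : ℝ) ^ (-kX)) (hkY : ∀ y, μY y ≤ (2 : ℝ) ^ (-kY))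
    (hk : (2 - η + lam) * Real.logb 2 (Fintype.card Λ) ≤ kX + kY) :
    |(∑ x, ∑ y, if g x y = false then μX x * μY y else 0)
      - ∑ x, ∑ y, if g x y = true then μX x * μY y else 0|
      ≤ (Fintype.card Λ : ℝ) ^ (-lam) := by
  set N : ℝ := (Fintype.card Λ : ℝ) with hN
  have hN1 : (1 : ℝ) ≤ N := by
    have h := Fintype.card_pos (α := Λ)
    rw [hN]; exact_mod_cast h
  have hN0 : (0 : ℝ) < N := lt_of_lt_of_le one_pos hN1
  set ε : Λ → Λ → ℝ := fun x y => if g x y = false then 1 else -1 with hε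
  set C : ℝ := N ^ (-η) * N ^ 2 with hC
  have hC0 : 0 ≤ C := mul_nonneg (Real.rpow_nonneg (le_of_lt hN0) _) (by positivity)
  -- discrepancy rephrased
  have hrect : ∀ A B : Finset Λ, |∑ x ∈ A, ∑ y ∈ B, ε x y| ≤ C := by
    intro A B
    have h1 : ∑ x ∈ A, ∑ y ∈ B, ε x y =
        (((A ×ˢ B).filter (fun p => g p.1 p.2 = false)).card : ℝ)
          - (((A ×ˢ B).filter (fun p => g p.1 p.2 = true)).card : ℝ) := by
      rw [← Finset.sum_product']
      rw [← Finset.sum_filter_add_sum_filter_not (A ×ˢ B) (fun p => g p.1 p.2 = false)]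
      have e1 : ∑ p ∈ (A ×ˢ B).filter (fun p => g p.1 p.2 = false), ε p.1 p.2 =
          (((A ×ˢ B).filter (fun p => g p.1 p.2 = false)).card : ℝ) := by
        rw [Finset.sum_congr rfl (fun p hp => ?_), Finset.sum_const, nsmul_eq_mul, mul_one]
        simp [hε, (Finset.mem_filter.mp hp).2]
      have e2 : ∑ p ∈ (A ×ˢ B).filter (fun p => ¬ g p.1 p.2 = false), ε p.1 p.2 =
          -(((A ×ˢ B).filter (fun p => g p.1 p.2 = true)).card : ℝ) := by
        have hf : (A ×ˢ B).filter (fun p => ¬ g p.1 p.2 = false)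
            = (A ×ˢ B).filter (fun p => g p.1 p.2 = true) := by
          apply Finset.filter_congr
          intro p _
          simp [Bool.not_eq_false]
        rw [hf, Finset.sum_congr rfl (fun p hp => ?_), Finset.sum_const, nsmul_eq_mul, mul_neg_one]
        have : g p.1 p.2 = true := by
          have := (Finset.mem_filter.mp hp).2
          simpa using this
        simp [hε, this]
      rw [e1, e2]
      ring
    rw [h1]
    have h2 := hdisc A B
    rw [div_le_iff₀ (by positivity)] at h2
    calc _ ≤ N ^ (-η) * N ^ 2 := h2
    _ = C := rfl
  -- rewrite bias as double sum with ε
  have hbias : (∑ x, ∑ y, if g x y = false then μX x * μY y else 0)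
      - (∑ x, ∑ y, if g x y = true then μX x * μY y else 0)
      = ∑ x, μX x * (∑ y, μY y * ε x y) := by
    rw [← Finset.sum_sub_distrib]
    apply Finset.sum_congr rfl
    intro x _
    rw [← Finset.sum_sub_distrib, Finset.mul_sum]
    apply Finset.sum_congr rfl
    intro y _
    by_cases h : g x y = false <;> simp [hε, h] <;> ring
  rw [hbias]
  have hpX : (0:ℝ) ≤ (2:ℝ) ^ (-kX) := Real.rpow_nonneg (by norm_num) _
  have hpY : (0:ℝ) ≤ (2:ℝ) ^ (-kY) := Real.rpow_nonneg (by norm_num) _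
  have hmain : |∑ x, μX x * (∑ y, μY y * ε x y)| ≤ (2:ℝ) ^ (-kX) * ((2:ℝ) ^ (-kY) * C) := by
    apply key_aux _ _ _ _ hpX hX0 hkX (mul_nonneg hpY hC0)
    intro A
    have hswap : ∑ x ∈ A, ∑ y, μY y * ε x y = ∑ y, μY y * (∑ x ∈ A, ε x y) := by
      rw [Finset.sum_comm]
      exact Finset.sum_congr rfl (fun y _ => (Finset.mul_sum _ _ _).symm)
    rw [hswap]
    apply key_aux _ _ _ _ hpY hY0 hkY hC0
    intro B
    have : ∑ y ∈ B, ∑ x ∈ A, ε x y = ∑ x ∈ A, ∑ y ∈ B, ε x y := Finset.sum_comm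
    rw [this]
    exact hrect A B
  refine le_trans hmain ?_
  -- arithmetic: 2^(-kX) * 2^(-kY) * N^(-η) * N^2 ≤ N^(-lam)
  have h2k : (2:ℝ) ^ (-kX) * (2:ℝ) ^ (-kY) = (2:ℝ) ^ (-(kX + kY)) := by
    rw [← Real.rpow_add (by norm_num)]; ring_nf
  have hNc : ∀ c : ℝ, N ^ c = (2:ℝ) ^ (c * Real.logb 2 N) := by
    intro c
    rw [mul_comm c, Real.rpow_mul (by norm_num : (0:ℝ) ≤ 2), Real.rpow_logb (by norm_num : (0:ℝ) < 2) (by norm_num) hN0]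
  have hstep : (2:ℝ) ^ (-(kX + kY)) ≤ N ^ (η - lam - 2) := by
    rw [hNc]
    apply Real.rpow_le_rpow_left_iff (x := (2:ℝ)) (by norm_num) |>.mpr
    have hlogN : 0 ≤ Real.logb 2 N := Real.logb_nonneg (by norm_num) hN1
    nlinarith [hk]
  calc (2:ℝ) ^ (-kX) * ((2:ℝ) ^ (-kY) * C)
      = (2:ℝ) ^ (-(kX+kY)) * C := by rw [← h2k]; ring
    _ ≤ N ^ (η - lam - 2) * C := by
        apply mul_le_mul_of_nonneg_right hstep hC0
    _ = N ^ (-lam) := by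
        rw [hC]
        have : (N:ℝ) ^ (2:ℕ) = N ^ (2:ℝ) := by
          rw [← Real.rpow_natCast]; norm_num
        rw [this, ← Real.rpow_add hN0, ← Real.rpow_add hN0]
        ring_nf
end

section
/- (Sampling property of low-discrepancy gadgets) Let γ, λ > 0, let Λ be a finite set, let g : Λ × Λ → {0,1} satisfy disc(g) ≤ |Λ|^{-η}, and let X, Y be independent random variables over Λ with H_∞(X) + H_∞(Y) ≥ (2 - η + γ + λ)·log₂|Λ| + 1. Then the probability that X takes a value x ∈ Λ such that bias(g(x,Y)) > |Λ|^{-λ} is less than |Λ|^{-γ}. -/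
open Finset
open scoped Classical

/-- Sampling property of low-discrepancy gadgets: with high probability `X` takes a value `x`
for which `bias(g(x,Y))` is small. -/
theorem stmt_8 {Λ : Type*} [Fintype Λ] [Nonempty Λ] (η γ lam : ℝ)
    (hη : 0 < η) (hγ : 0 < γ) (hlam : 0 < lam)
    (g : Λ → Λ → Bool)
    (hdisc : ∀ A B : Finset Λ,
      |(((A ×ˢ B).filter (fun p => g p.1 p.2 = false)).card : ℝ)
          - (((A ×ˢ B).filter (fun p => g p.1 p.2 = true)).card : ℝ)|
        / ((Fintype.card Λ : ℝ) ^ 2)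
        ≤ (Fintype.card Λ : ℝ) ^ (-η))
    (μX μY : Λ → ℝ) (hX0 : ∀ x, 0 ≤ μX x) (hX1 : ∑ x, μX x = 1)
    (hY0 : ∀ y, 0 ≤ μY y) (hY1 : ∑ y, μY y = 1)
    (kX kY : ℝ) (hkX : ∀ x, μX x ≤ (2 : ℝ) ^ (-kX)) (hkY : ∀ y, μY y ≤ (2 : ℝ) ^ (-kY))
    (hk : (2 - η + γ + lam) * Real.logb 2 (Fintype.card Λ) + 1 ≤ kX + kY) :
    ∑ x ∈ univ.filter (fun x =>
        (Fintype.card Λ : ℝ) ^ (-lam) <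
          |(∑ y, if g x y = false then μY y else 0) - ∑ y, if g x y = true then μY y else 0|),
      μX x < (Fintype.card Λ : ℝ) ^ (-γ) := by
  set N : ℝ := (Fintype.card Λ : ℝ) with hNdef
  have hN0 : (0:ℝ) < N := by
    have : 0 < Fintype.card Λ := Fintype.card_pos
    rw [hNdef]; exact_mod_cast this
  -- the signed gadget
  set ε : Λ → Λ → ℝ := fun x y => if g x y then (-1:ℝ) else 1 with hεdef
  set f : Λ → ℝ := fun x => ∑ y, μY y * ε x y with hfdef
  have hbias : ∀ x, (∑ y, if g x y = false then μY y else 0)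
      - (∑ y, if g x y = true then μY y else 0) = f x := by
    intro x
    rw [hfdef, ← Finset.sum_sub_distrib]
    apply Finset.sum_congr rfl
    intro y _
    by_cases h : g x y <;> simp [hεdef, h]
  -- discrepancy in signed form
  have hD : ∀ A B : Finset Λ, |∑ x ∈ A, ∑ y ∈ B, ε x y| ≤ N ^ 2 * N ^ (-η) := by
    intro A B
    have hsum : ∑ x ∈ A, ∑ y ∈ B, ε x y
        = (((A ×ˢ B).filter (fun p => g p.1 p.2 = false)).card : ℝ)
          - (((A ×ˢ B).filter (fun p => g p.1 p.2 = true)).card : ℝ) := by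
      rw [← Finset.sum_product']
      have : ∀ p ∈ A ×ˢ B, ε p.1 p.2
          = (if g p.1 p.2 = false then (1:ℝ) else 0) - (if g p.1 p.2 = true then (1:ℝ) else 0) := by
        intro p _
        by_cases h : g p.1 p.2 <;> simp [hεdef, h]
      rw [Finset.sum_congr rfl this, Finset.sum_sub_distrib]
      simp [Finset.sum_boole]
    have h2 : (0:ℝ) < N ^ 2 := by positivity
    have := hdisc A B
    rw [div_le_iff₀ h2] at this
    rw [hsum]
    calc |_| ≤ N ^ (-η) * N ^ 2 := this
      _ = N ^ 2 * N ^ (-η) := by ring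
  -- upper and lower bounds for sums of f over arbitrary sets
  have h2kY : (0:ℝ) ≤ (2:ℝ) ^ (-kY) := by positivity
  have h2kX : (0:ℝ) ≤ (2:ℝ) ^ (-kX) := by positivity
  have hswap : ∀ A : Finset Λ, ∑ x ∈ A, f x = ∑ y, μY y * (∑ x ∈ A, ε x y) := by
    intro A
    rw [hfdef]
    rw [Finset.sum_comm]
    exact Finset.sum_congr rfl fun y _ => (Finset.mul_sum _ _ _).symm
  have hUp : ∀ A : Finset Λ, ∑ x ∈ A, f x ≤ (2:ℝ) ^ (-kY) * (N ^ 2 * N ^ (-η)) := by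
    intro A
    rw [hswap A]
    set h : Λ → ℝ := fun y => ∑ x ∈ A, ε x y with hh
    set B : Finset Λ := univ.filter (fun y => 0 < h y) with hB
    have step1 : ∑ y, μY y * h y ≤ ∑ y ∈ B, μY y * h y := by
      rw [← Finset.sum_filter_add_sum_filter_not univ (fun y => 0 < h y) (fun y => μY y * h y)]
      have hnonpos : ∑ y ∈ univ.filter (fun y => ¬ 0 < h y), μY y * h y ≤ 0 := by
        apply Finset.sum_nonpos
        intro y hy
        exact mul_nonpos_of_nonneg_of_nonpos (hY0 y) (le_of_not_gt (Finset.mem_filter.mp hy).2)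
      linarith
    have step2 : ∑ y ∈ B, μY y * h y ≤ (2:ℝ) ^ (-kY) * ∑ y ∈ B, h y := by
      rw [Finset.mul_sum]
      apply Finset.sum_le_sum
      intro y hy
      exact mul_le_mul_of_nonneg_right (hkY y) (le_of_lt (Finset.mem_filter.mp hy).2)
    have step3 : ∑ y ∈ B, h y ≤ N ^ 2 * N ^ (-η) := by
      have heq : ∑ y ∈ B, h y = ∑ x ∈ A, ∑ y ∈ B, ε x y := Finset.sum_comm
      rw [heq]
      exact le_trans (le_abs_self _) (hD A B)
    calc ∑ y, μY y * h y ≤ (2:ℝ) ^ (-kY) * ∑ y ∈ B, h y := le_trans step1 step2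
      _ ≤ (2:ℝ) ^ (-kY) * (N ^ 2 * N ^ (-η)) := mul_le_mul_of_nonneg_left step3 h2kY
  have hLo : ∀ A : Finset Λ, -((2:ℝ) ^ (-kY) * (N ^ 2 * N ^ (-η))) ≤ ∑ x ∈ A, f x := by
    intro A
    rw [hswap A]
    set h : Λ → ℝ := fun y => ∑ x ∈ A, ε x y with hh
    set B : Finset Λ := univ.filter (fun y => h y < 0) with hB
    have step1 : ∑ y ∈ B, μY y * h y ≤ ∑ y, μY y * h y := by
      rw [← Finset.sum_filter_add_sum_filter_not univ (fun y => h y < 0) (fun y => μY y * h y)]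
      have hnn : 0 ≤ ∑ y ∈ univ.filter (fun y => ¬ h y < 0), μY y * h y := by
        apply Finset.sum_nonneg
        intro y hy
        exact mul_nonneg (hY0 y) (le_of_not_gt (Finset.mem_filter.mp hy).2)
      linarith
    have step2 : (2:ℝ) ^ (-kY) * ∑ y ∈ B, h y ≤ ∑ y ∈ B, μY y * h y := by
      rw [Finset.mul_sum]
      apply Finset.sum_le_sum
      intro y hy
      have hyneg : h y ≤ 0 := le_of_lt (Finset.mem_filter.mp hy).2
      nlinarith [hkY y, hY0 y]
    have step3 : -(N ^ 2 * N ^ (-η)) ≤ ∑ y ∈ B, h y := by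
      have heq : ∑ y ∈ B, h y = ∑ x ∈ A, ∑ y ∈ B, ε x y := Finset.sum_comm
      rw [heq]
      exact neg_le_of_abs_le (hD A B)
    have : (2:ℝ) ^ (-kY) * (-(N ^ 2 * N ^ (-η))) ≤ (2:ℝ) ^ (-kY) * ∑ y ∈ B, h y :=
      mul_le_mul_of_nonneg_left step3 h2kY
    nlinarith
  -- the bad sets
  set c : ℝ := N ^ (-lam) with hcdef
  have hc : 0 < c := Real.rpow_pos_of_pos hN0 _
  have hSeq : (univ.filter (fun x => c <
      |(∑ y, if g x y = false then μY y else 0) - ∑ y, if g x y = true then μY y else 0|))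
      = univ.filter (fun x => c < |f x|) := by
    apply Finset.filter_congr
    intro x _
    rw [hbias x]
  rw [hSeq]
  set S : Finset Λ := univ.filter (fun x => c < |f x|) with hS
  set SP : Finset Λ := univ.filter (fun x => c < f x) with hSP
  set SM : Finset Λ := univ.filter (fun x => f x < -c) with hSM
  have hsplit : S = SP ∪ SM := by
    ext x
    simp only [hS, hSP, hSM, Finset.mem_filter, Finset.mem_union, Finset.mem_univ, true_and]
    rw [lt_abs]
    constructor
    · rintro (h | h)
      · exact Or.inl h
      · exact Or.inr (by linarith)
    · rintro (h | h)
      · exact Or.inl h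
      · exact Or.inr (by linarith)
  have hdisj : Disjoint SP SM := by
    rw [Finset.disjoint_left]
    intro x hx hx'
    simp only [hSP, hSM, Finset.mem_filter] at hx hx'
    linarith [hx.2, hx'.2, hc]
  -- bound the weighted bias over S
  have hSPb : ∑ x ∈ SP, μX x * |f x| ≤ (2:ℝ) ^ (-kX) * ((2:ℝ) ^ (-kY) * (N ^ 2 * N ^ (-η))) := by
    have habs : ∀ x ∈ SP, μX x * |f x| = μX x * f x := by
      intro x hx
      have : c < f x := (Finset.mem_filter.mp hx).2
      rw [abs_of_pos (lt_trans hc this)]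
    rw [Finset.sum_congr rfl habs]
    calc ∑ x ∈ SP, μX x * f x ≤ ∑ x ∈ SP, (2:ℝ) ^ (-kX) * f x := by
          apply Finset.sum_le_sum
          intro x hx
          have : c < f x := (Finset.mem_filter.mp hx).2
          exact mul_le_mul_of_nonneg_right (hkX x) (le_of_lt (lt_trans hc this))
      _ = (2:ℝ) ^ (-kX) * ∑ x ∈ SP, f x := (Finset.mul_sum _ _ _).symm
      _ ≤ _ := mul_le_mul_of_nonneg_left (hUp SP) h2kX
  have hSMb : ∑ x ∈ SM, μX x * |f x| ≤ (2:ℝ) ^ (-kX) * ((2:ℝ) ^ (-kY) * (N ^ 2 * N ^ (-η))) := by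
    have habs : ∀ x ∈ SM, μX x * |f x| = μX x * (-f x) := by
      intro x hx
      have : f x < -c := (Finset.mem_filter.mp hx).2
      rw [abs_of_neg (by linarith)]
    rw [Finset.sum_congr rfl habs]
    calc ∑ x ∈ SM, μX x * (-f x) ≤ ∑ x ∈ SM, (2:ℝ) ^ (-kX) * (-f x) := by
          apply Finset.sum_le_sum
          intro x hx
          have : f x < -c := (Finset.mem_filter.mp hx).2
          exact mul_le_mul_of_nonneg_right (hkX x) (by linarith)
      _ = (2:ℝ) ^ (-kX) * ∑ x ∈ SM, (-f x) := (Finset.mul_sum _ _ _).symm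
      _ = (2:ℝ) ^ (-kX) * (-(∑ x ∈ SM, f x)) := by rw [Finset.sum_neg_distrib]
      _ ≤ _ := by
          apply mul_le_mul_of_nonneg_left _ h2kX
          linarith [hLo SM]
  have hSb : ∑ x ∈ S, μX x * |f x|
      ≤ 2 * ((2:ℝ) ^ (-kX) * ((2:ℝ) ^ (-kY) * (N ^ 2 * N ^ (-η)))) := by
    rw [hsplit, Finset.sum_union hdisj]
    linarith
  -- final numeric bound
  have hfinal : 2 * ((2:ℝ) ^ (-kX) * ((2:ℝ) ^ (-kY) * (N ^ 2 * N ^ (-η)))) ≤ N ^ (-γ) * c := by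
    have hmul : (2:ℝ) ^ (-kX) * (2:ℝ) ^ (-kY) = (2:ℝ) ^ (-(kX + kY)) := by
      rw [← Real.rpow_add two_pos]
      ring_nf
    have h3 : (2:ℝ) ^ (-(kX + kY))
        ≤ (2:ℝ) ^ (-((2 - η + γ + lam) * Real.logb 2 N + 1)) :=
      Real.rpow_le_rpow_of_exponent_le one_le_two (by linarith)
    have h4 : (2:ℝ) ^ (-((2 - η + γ + lam) * Real.logb 2 N + 1))
        = N ^ (-(2 - η + γ + lam)) * (1/2) := by
      rw [show -((2 - η + γ + lam) * Real.logb 2 N + 1)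
          = Real.logb 2 N * (-(2 - η + γ + lam)) + (-1) by ring]
      rw [Real.rpow_add two_pos, Real.rpow_mul (by norm_num : (0:ℝ) ≤ 2),
        Real.rpow_logb two_pos (by norm_num) hN0]
      norm_num [Real.rpow_neg_one]
    have hN2 : N ^ 2 = N ^ ((2:ℕ) : ℝ) := (Real.rpow_natCast N 2).symm
    have key : N ^ (-(2 - η + γ + lam)) * (N ^ 2 * N ^ (-η)) = N ^ (-γ) * c := by
      rw [hcdef, hN2, ← Real.rpow_add hN0, ← Real.rpow_add hN0, ← Real.rpow_add hN0]
      congr 1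
      push_cast
      ring
    have hP : (0:ℝ) ≤ N ^ 2 * N ^ (-η) := by positivity
    calc 2 * ((2:ℝ) ^ (-kX) * ((2:ℝ) ^ (-kY) * (N ^ 2 * N ^ (-η))))
        = 2 * ((2:ℝ) ^ (-(kX + kY)) * (N ^ 2 * N ^ (-η))) := by rw [← hmul]; ring
      _ ≤ 2 * ((N ^ (-(2 - η + γ + lam)) * (1/2)) * (N ^ 2 * N ^ (-η))) := by
          have := mul_le_mul_of_nonneg_right (le_trans h3 (le_of_eq h4)) hP
          linarith
      _ = N ^ (-(2 - η + γ + lam)) * (N ^ 2 * N ^ (-η)) := by ring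
      _ = N ^ (-γ) * c := key
  -- conclude, with strictness
  by_cases hz : ∀ x ∈ S, μX x = 0
  · rw [Finset.sum_eq_zero hz]
    exact Real.rpow_pos_of_pos hN0 _
  · push_neg at hz
    obtain ⟨x0, hx0S, hx0⟩ := hz
    have hx0pos : 0 < μX x0 := lt_of_le_of_ne (hX0 x0) (Ne.symm hx0)
    have hstrict : ∑ x ∈ S, μX x * c < ∑ x ∈ S, μX x * |f x| := by
      apply Finset.sum_lt_sum
      · intro x hx
        have : c < |f x| := (Finset.mem_filter.mp hx).2
        exact mul_le_mul_of_nonneg_left (le_of_lt this) (hX0 x)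
      · refine ⟨x0, hx0S, ?_⟩
        have : c < |f x0| := (Finset.mem_filter.mp hx0S).2
        exact (mul_lt_mul_iff_right₀ hx0pos).mpr this
    have hsum_c : ∑ x ∈ S, μX x * c = (∑ x ∈ S, μX x) * c := by
      rw [Finset.sum_mul]
    have : (∑ x ∈ S, μX x) * c < N ^ (-γ) * c := by
      rw [← hsum_c]
      exact lt_of_lt_of_le hstrict (le_trans hSb hfinal)
    exact lt_of_mul_lt_mul_right this (le_of_lt hc)
end

section
/- (Density-restoring fixing) Let X be a random variable taking values in Λ^n for a finite alphabet Λ with |Λ| = 2^b, let δ > 0, and let I ⊆ [n] be a maximal subset of coordinates such that H_∞(X_I) < δ·b·|I|. Let x_I ∈ Λ^I be a value with Pr[X_I = x_I] > 2^{-δ·b·|I|}. Then the random variable X_{[n]∖I} conditioned on X_I = x_I is δ-dense, i.e., for every J ⊆ [n]∖I, H_∞(X_J | X_I = x_I) ≥ δ·b·|J|. -/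
open Finset
open scoped Classical

/-- Density-restoring fixing: if `I` is a maximal set of coordinates violating `δ`-density and
`x_I` is a heavy value of `X_I`, then `X_{[n]∖I}` conditioned on `X_I = x_I` is `δ`-dense. -/
theorem stmt_9 (n b : ℕ) {Λ : Type*} [Fintype Λ] [DecidableEq Λ]
    (hcard : Fintype.card Λ = 2 ^ b)
    (μ : (Fin n → Λ) → ℝ) (hnn : ∀ z, 0 ≤ μ z) (hsum : ∑ z, μ z = 1)
    (δ : ℝ) (hδ : 0 < δ) (I : Finset (Fin n))
    (hmax : ∀ I' : Finset (Fin n), I ⊂ I' →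
      ∀ x : Fin n → Λ,
        ∑ z ∈ univ.filter (fun z => ∀ i ∈ I', z i = x i), μ z
          ≤ (2 : ℝ) ^ (-(δ * b * I'.card)))
    (xI : Fin n → Λ)
    (hxI : (2 : ℝ) ^ (-(δ * b * I.card))
        < ∑ z ∈ univ.filter (fun z => ∀ i ∈ I, z i = xI i), μ z) :
    ∀ J : Finset (Fin n), Disjoint J I → ∀ x : Fin n → Λ,
      (∑ z ∈ univ.filter (fun z => (∀ i ∈ J, z i = x i) ∧ ∀ i ∈ I, z i = xI i), μ z)
          / (∑ z ∈ univ.filter (fun z => ∀ i ∈ I, z i = xI i), μ z)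
        ≤ (2 : ℝ) ^ (-(δ * b * J.card)) := by
  intro J hJI x
  have hDpos : 0 < ∑ z ∈ univ.filter (fun z => ∀ i ∈ I, z i = xI i), μ z :=
    lt_trans (Real.rpow_pos_of_pos two_pos _) hxI
  rcases J.eq_empty_or_nonempty with rfl | hJne
  · simp only [Finset.notMem_empty, false_implies, implies_true, true_and,
      Finset.card_empty, Nat.cast_zero, mul_zero, neg_zero, Real.rpow_zero]
    rw [div_le_one hDpos]
  · have hss : I ⊂ I ∪ J := by
      rcases hJne with ⟨j, hj⟩
      refine Finset.ssubset_iff_of_subset Finset.subset_union_left |>.mpr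
        ⟨j, Finset.mem_union_right _ hj, fun hjI => (Finset.disjoint_left.mp hJI hj) hjI⟩
    set x' : Fin n → Λ := fun i => if i ∈ J then x i else xI i with hx'
    have hfilt : (univ.filter (fun z : Fin n → Λ => (∀ i ∈ J, z i = x i) ∧ ∀ i ∈ I, z i = xI i))
        = univ.filter (fun z : Fin n → Λ => ∀ i ∈ I ∪ J, z i = x' i) := by
      ext z
      simp only [Finset.mem_filter, Finset.mem_univ, true_and, Finset.mem_union, hx']
      constructor
      · rintro ⟨h1, h2⟩ i hi
        rcases hi with hi | hi
        · have : i ∉ J := fun hiJ => Finset.disjoint_left.mp hJI hiJ hi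
          simp [this, h2 i hi]
        · simp [hi, h1 i hi]
      · intro h
        constructor
        · intro i hi
          have := h i (Or.inr hi); simpa [hi] using this
        · intro i hi
          have hiJ : i ∉ J := fun hiJ => Finset.disjoint_left.mp hJI hiJ hi
          have := h i (Or.inl hi); simpa [hiJ] using this
    have hnum := hmax (I ∪ J) hss x'
    rw [hfilt]
    rw [div_le_iff₀ hDpos]
    calc ∑ z ∈ univ.filter (fun z => ∀ i ∈ I ∪ J, z i = x' i), μ z
        ≤ (2 : ℝ) ^ (-(δ * b * (I ∪ J).card)) := hnum
      _ = (2 : ℝ) ^ (-(δ * b * J.card)) * (2 : ℝ) ^ (-(δ * b * I.card)) := by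
          rw [Finset.card_union_of_disjoint hJI.symm, ← Real.rpow_add two_pos]
          push_cast
          ring_nf
      _ ≤ (2 : ℝ) ^ (-(δ * b * J.card)) * ∑ z ∈ univ.filter (fun z => ∀ i ∈ I, z i = xI i), μ z := by
          exact mul_le_mul_of_nonneg_left hxI.le (Real.rpow_pos_of_pos two_pos _).le
end

section
/- (Density-restoring partition) Let X be a random variable with support 𝒳 ⊆ Λ^n where |Λ| = 2^b, and let δ > 0. Then there is a partition 𝒳 = 𝒳¹ ∪ ⋯ ∪ 𝒳^ℓ where each 𝒳^j is associated with a set I_j ⊆ [n] and a value x_j ∈ Λ^{I_j} such that: (1) X_{I_j} conditioned on X ∈ 𝒳^j is fixed to x_j; (2) X_{[n]∖I_j} conditioned on X ∈ 𝒳^j is δ-dense; and (3) with p_{≥j} = Pr[X ∈ 𝒳^j ∪ ⋯ ∪ 𝒳^ℓ], it holds that H_∞(X_{[n]∖I_j} | X ∈ 𝒳^j) ≥ H_∞(X) - δ·b·|I_j| - log₂(1/p_{≥j}). -/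
open Finset
open scoped Classical

set_option linter.unusedSectionVars false
set_option maxHeartbeats 1000000

noncomputable section
namespace Stmt10Aux

noncomputable def pickMax {α : Type*} (C : Finset α) (f : α → ℕ) (h : C.Nonempty) : α :=
  (Finset.exists_max_image C f h).choose

lemma pickMax_mem {α : Type*} (C : Finset α) (f : α → ℕ) (h : C.Nonempty) :
    pickMax C f h ∈ C := (Finset.exists_max_image C f h).choose_spec.1

lemma pickMax_le {α : Type*} (C : Finset α) (f : α → ℕ) (h : C.Nonempty) :
    ∀ a ∈ C, f a ≤ f (pickMax C f h) := (Finset.exists_max_image C f h).choose_spec.2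


lemma sum_drop {α : Type*} (f : α → ℝ) (l : List α) : ∀ (j : ℕ),
    ((l.drop j).map f).sum = ∑ i : Fin l.length, if j ≤ (i:ℕ) then f (l.get i) else 0 := by
  induction l with
  | nil => intro j; simp
  | cons a t ih =>
    intro j
    cases j with
    | zero =>
      simp [Fin.sum_univ_succ, Nat.zero_le, ih 0]
    | succ m =>
      have h := ih m
      simp only [List.map_drop] at h
      simp [Fin.sum_univ_succ, Nat.succ_le_succ_iff, h]

variable {n : ℕ} {Λ : Type*} [Fintype Λ] [DecidableEq Λ]

def W (μ : (Fin n → Λ) → ℝ) (S : Finset (Fin n → Λ)) : ℝ := ∑ z ∈ S, μ z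

def fset (S : Finset (Fin n → Λ)) (I : Finset (Fin n)) (x : Fin n → Λ) : Finset (Fin n → Λ) :=
  S.filter (fun z => ∀ i ∈ I, z i = x i)

lemma fset_subset (S : Finset (Fin n → Λ)) (I : Finset (Fin n)) (x : Fin n → Λ) :
    fset S I x ⊆ S := Finset.filter_subset _ _

lemma W_nonneg (μ : (Fin n → Λ) → ℝ) (hnn : ∀ z, 0 ≤ μ z) (S : Finset (Fin n → Λ)) :
    0 ≤ W μ S := Finset.sum_nonneg fun z _ => hnn z

def cands (μ : (Fin n → Λ) → ℝ) (c : ℝ) (S : Finset (Fin n → Λ)) :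
    Finset (Finset (Fin n) × (Fin n → Λ)) :=
  Finset.univ.filter (fun p => (fset S p.1 p.2).Nonempty ∧
    (2:ℝ) ^ (-(c * p.1.card)) * W μ S < W μ (fset S p.1 p.2))

def step (μ : (Fin n → Λ) → ℝ) (c : ℝ) (S : Finset (Fin n → Λ))
    (hC : (cands μ c S).Nonempty) : Finset (Fin n) × (Fin n → Λ) :=
  pickMax (cands μ c S) (fun q => q.1.card) hC

lemma step_mem (μ : (Fin n → Λ) → ℝ) (c : ℝ) (S : Finset (Fin n → Λ))
    (hC : (cands μ c S).Nonempty) : step μ c S hC ∈ cands μ c S := pickMax_mem _ _ _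

lemma step_max (μ : (Fin n → Λ) → ℝ) (c : ℝ) (S : Finset (Fin n → Λ))
    (hC : (cands μ c S).Nonempty) : ∀ q ∈ cands μ c S, q.1.card ≤ (step μ c S hC).1.card :=
  pickMax_le _ _ _

def build (μ : (Fin n → Λ) → ℝ) (c : ℝ) (S : Finset (Fin n → Λ)) :
    List (Finset (Fin n → Λ) × Finset (Fin n) × (Fin n → Λ)) :=
  if hS : S.Nonempty then
    if hC : (cands μ c S).Nonempty then
      (fset S (step μ c S hC).1 (step μ c S hC).2, step μ c S hC) ::
        build μ c (S \ fset S (step μ c S hC).1 (step μ c S hC).2)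
    else [(S, (∅ : Finset (Fin n)), hS.choose)]
  else []
termination_by S.card
decreasing_by
  have hmem := step_mem μ c S hC
  simp only [cands, Finset.mem_filter] at hmem
  exact Finset.card_lt_card (Finset.sdiff_ssubset (fset_subset _ _ _) hmem.2.1)

def Spec (μ : (Fin n → Λ) → ℝ) (c : ℝ) (S : Finset (Fin n → Λ))
    (L : List (Finset (Fin n → Λ) × Finset (Fin n) × (Fin n → Λ))) : Prop :=
  (L.map (fun e => W μ e.1)).sum = W μ S ∧
  (∀ z, z ∈ S ↔ ∃ e ∈ L, z ∈ e.1) ∧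
  L.Pairwise (fun e e' => Disjoint e.1 e'.1) ∧
  (∀ e ∈ L, e.1.Nonempty ∧ e.1 ⊆ S ∧
    (∀ z ∈ e.1, ∀ i ∈ e.2.1, z i = e.2.2 i) ∧
    (∀ J, Disjoint J e.2.1 → ∀ x, W μ (fset e.1 J x) ≤ (2:ℝ)^(-(c * J.card)) * W μ e.1)) ∧
  (∀ (j : ℕ) (e : Finset (Fin n → Λ) × Finset (Fin n) × (Fin n → Λ)),
    (L.drop j).head? = some e →
    (2:ℝ)^(-(c * (e.2.1.card : ℝ))) * ((L.drop j).map (fun e => W μ e.1)).sum ≤ W μ e.1)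

lemma build_spec (μ : (Fin n → Λ) → ℝ) (c : ℝ) (hnn : ∀ z, 0 ≤ μ z) :
    ∀ (N : ℕ) (S : Finset (Fin n → Λ)), S.card ≤ N →
      Spec μ c S (build μ c S) := by
  have hempty : Spec μ c ∅ (build μ c (∅ : Finset (Fin n → Λ))) := by
    have hb : build μ c (∅ : Finset (Fin n → Λ)) = [] := by
      rw [build]; simp
    rw [Spec, hb]
    refine ⟨by simp [W], by simp, by simp, by simp, ?_⟩
    intro j e hj; simp at hj
  intro N
  induction N with
  | zero =>
    intro S hcard
    have : S = ∅ := Finset.card_eq_zero.1 (Nat.le_zero.1 hcard)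
    subst this; exact hempty
  | succ N ih =>
    intro S hcard
    rcases S.eq_empty_or_nonempty with rfl | hS
    · exact hempty
    by_cases hC : (cands μ c S).Nonempty
    · -- candidate case
      have hpc := step_mem μ c S hC
      rw [cands, Finset.mem_filter] at hpc
      set p := step μ c S hC with hp
      set P := fset S p.1 p.2 with hP
      have hPne : P.Nonempty := hpc.2.1
      have hPlt : (2:ℝ) ^ (-(c * p.1.card)) * W μ S < W μ P := hpc.2.2
      have hPsub : P ⊆ S := fset_subset _ _ _
      have hb : build μ c S = (P, p) :: build μ c (S \ P) := by
        rw [build, dif_pos hS, dif_pos hC]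
      have hltN : (S \ P).card ≤ N := by
        have := Finset.card_lt_card (Finset.sdiff_ssubset hPsub hPne)
        omega
      obtain ⟨ih0, ih1, ih2, ih3, ih4⟩ := ih (S \ P) hltN
      have hsum' : W μ P + ((build μ c (S \ P)).map (fun e => W μ e.1)).sum = W μ S := by
        rw [ih0, W, W, W, add_comm, Finset.sum_sdiff hPsub]
      constructor
      · rw [hb]; simpa using hsum'
      refine ⟨?_, ?_, ?_, ?_⟩
      · -- cover
        intro z
        rw [hb]
        constructor
        · intro hz
          by_cases hzP : z ∈ P
          · exact ⟨(P, p), List.mem_cons_self, hzP⟩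
          · obtain ⟨e, he, hze⟩ := (ih1 z).1 (Finset.mem_sdiff.2 ⟨hz, hzP⟩)
            exact ⟨e, List.mem_cons_of_mem _ he, hze⟩
        · rintro ⟨e, he, hze⟩
          rcases List.mem_cons.1 he with rfl | he'
          · exact hPsub hze
          · exact (Finset.sdiff_subset) ((ih3 e he').2.1 hze)
      · -- pairwise
        rw [hb, List.pairwise_cons]
        refine ⟨fun e' he' => ?_, ih2⟩
        exact (Finset.disjoint_sdiff).mono_right ((ih3 e' he').2.1)
      · -- per-element
        intro e he
        rw [hb] at he
        rcases List.mem_cons.1 he with rfl | he'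
        · refine ⟨hPne, hPsub, ?_, ?_⟩
          · intro z hz
            exact (Finset.mem_filter.1 hz).2
          · -- density of the head part
            intro J hJ0 x
            have hJ : Disjoint J p.1 := hJ0
            show W μ (fset P J x) ≤ (2:ℝ)^(-(c * (J.card:ℝ))) * W μ P
            rcases J.eq_empty_or_nonempty with rfl | hJne
            · have h1 : fset P ∅ x = P := by simp [fset]
              rw [h1]; simp
            · by_contra hcon
              push_neg at hcon
              have hlt2 : (2:ℝ)^(-(c * J.card)) * W μ P < W μ (fset P J x) := hcon
              set y : Fin n → Λ := fun i => if i ∈ p.1 then p.2 i else x i with hy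
              have hfs : fset S (p.1 ∪ J) y = fset P J x := by
                rw [hP]
                rw [fset, fset, fset, Finset.filter_filter]
                ext z
                simp only [Finset.mem_filter, Finset.mem_union]
                refine ⟨fun ⟨hzS, hagree⟩ => ⟨hzS, ?_, ?_⟩, fun ⟨hzS, h1, h2⟩ => ⟨hzS, ?_⟩⟩
                · intro i hi
                  have := hagree i (Or.inl hi)
                  simpa [hy, hi] using this
                · intro i hi
                  have hni : i ∉ p.1 := fun h => Finset.disjoint_left.1 hJ hi h
                  have := hagree i (Or.inr hi)
                  simpa [hy, hni] using this
                · intro i hi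
                  rcases hi with hi | hi
                  · simpa [hy, hi] using h1 i hi
                  · have hni : i ∉ p.1 := fun h => Finset.disjoint_left.1 hJ hi h
                    simpa [hy, hni] using h2 i hi
              have hcardu : (((p.1 ∪ J).card : ℕ) : ℝ) = (p.1.card : ℝ) + (J.card : ℝ) := by
                rw [Finset.card_union_of_disjoint hJ.symm]; push_cast; ring
              have key : (2:ℝ)^(-(c * ((p.1 ∪ J).card : ℝ))) * W μ S
                  < W μ (fset S (p.1 ∪ J) y) := by
                rw [hfs, hcardu]
                have e1 : (2:ℝ)^(-(c * ((p.1.card : ℝ) + (J.card : ℝ)))) * W μ S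
                    = (2:ℝ)^(-(c * (J.card:ℝ))) * ((2:ℝ)^(-(c * (p.1.card:ℝ))) * W μ S) := by
                  rw [← mul_assoc, ← Real.rpow_add (by norm_num : (0:ℝ) < 2)]
                  ring_nf
                rw [e1]
                calc (2:ℝ)^(-(c * (J.card:ℝ))) * ((2:ℝ)^(-(c * (p.1.card:ℝ))) * W μ S)
                    < (2:ℝ)^(-(c * (J.card:ℝ))) * W μ P :=
                      mul_lt_mul_of_pos_left hPlt (Real.rpow_pos_of_pos (by norm_num) _)
                  _ < W μ (fset P J x) := hlt2
              have hq : (p.1 ∪ J, y) ∈ cands μ c S := by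
                rw [cands, Finset.mem_filter]
                refine ⟨Finset.mem_univ _, ?_, key⟩
                rw [Finset.nonempty_iff_ne_empty]
                intro h0
                rw [h0] at key
                have hz0 : W μ (∅ : Finset (Fin n → Λ)) = 0 := by simp [W]
                rw [hz0] at key
                have : (0:ℝ) ≤ (2:ℝ)^(-(c * ((p.1 ∪ J).card : ℝ))) * W μ S :=
                  mul_nonneg (Real.rpow_pos_of_pos (by norm_num) _).le (W_nonneg μ hnn S)
                linarith
              have hmax := step_max μ c S hC _ hq
              rw [← hp] at hmax
              simp only at hmax
              rw [Finset.card_union_of_disjoint hJ.symm] at hmax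
              have hJpos : 0 < J.card := Finset.card_pos.2 hJne
              omega
        · obtain ⟨h1, h2, h3, h4⟩ := ih3 e he'
          exact ⟨h1, h2.trans Finset.sdiff_subset, h3, h4⟩
      · -- tail-sum bound
        intro j e hhead
        match j, hhead with
        | 0, hhead =>
          rw [hb] at hhead ⊢
          simp only [List.drop_zero, List.head?_cons, Option.some.injEq] at hhead
          subst hhead
          simp only [List.drop_zero, List.map_cons, List.sum_cons]
          rw [hsum']
          exact hPlt.le
        | (j+1), hhead =>
          rw [hb] at hhead ⊢
          simp only [List.drop_succ_cons] at hhead ⊢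
          exact ih4 j e hhead
    · -- no candidates: single class
      have hb : build μ c S = [(S, (∅ : Finset (Fin n)), hS.choose)] := by
        rw [build, dif_pos hS, dif_neg hC]
      rw [Spec, hb]
      refine ⟨by simp, by simp, by simp, ?_, ?_⟩
      · intro e he
        simp only [List.mem_singleton] at he
        subst he
        refine ⟨hS, subset_rfl, by simp, ?_⟩
        intro J _ x
        by_cases hne : (fset S J x).Nonempty
        · have hnc : (J, x) ∉ cands μ c S := fun h => hC ⟨_, h⟩
          rw [cands, Finset.mem_filter] at hnc
          push_neg at hnc
          exact hnc (Finset.mem_univ _) hne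
        · rw [Finset.not_nonempty_iff_eq_empty] at hne
          rw [hne]
          have hz0 : W μ (∅ : Finset (Fin n → Λ)) = 0 := by simp [W]
          rw [hz0]
          exact mul_nonneg (Real.rpow_pos_of_pos (by norm_num) _).le (W_nonneg μ hnn S)
      · intro j e hhead
        match j, hhead with
        | 0, hhead =>
          simp only [List.drop_zero, List.head?_cons, Option.some.injEq] at hhead
          subst hhead
          simp
        | (j+1), hhead =>
          simp at hhead

end Stmt10Aux

/-- Density-restoring partition: the support of `X` can be partitioned into classes, each fixing
some coordinates `I_j` to a value `x_j`, being `δ`-dense on the remaining coordinates, and losing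
min-entropy at most `δ·b·|I_j| + log₂(1/p_{≥j})`. -/
theorem stmt_10 (n b : ℕ) {Λ : Type*} [Fintype Λ] [DecidableEq Λ]
    (hcard : Fintype.card Λ = 2 ^ b)
    (μ : (Fin n → Λ) → ℝ) (hnn : ∀ z, 0 ≤ μ z) (hsum : ∑ z, μ z = 1)
    (δ : ℝ) (hδ : 0 < δ) :
    ∃ (ℓ : ℕ) (parts : Fin ℓ → Finset (Fin n → Λ)) (I : Fin ℓ → Finset (Fin n))
      (xv : Fin ℓ → Fin n → Λ),
      (∀ j j', j ≠ j' → Disjoint (parts j) (parts j')) ∧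
      (∀ z, 0 < μ z ↔ ∃ j, z ∈ parts j) ∧
      (∀ j, ∀ z ∈ parts j, ∀ i ∈ I j, z i = xv j i) ∧
      (∀ j, ∀ J : Finset (Fin n), Disjoint J (I j) → ∀ x : Fin n → Λ,
        (∑ z ∈ (parts j).filter (fun z => ∀ i ∈ J, z i = x i), μ z)
            / (∑ z ∈ parts j, μ z)
          ≤ (2 : ℝ) ^ (-(δ * b * J.card))) ∧
      (∀ j, ∀ k : ℝ, (∀ z, μ z ≤ (2 : ℝ) ^ (-k)) → ∀ x : Fin n → Λ,
        (∑ z ∈ (parts j).filter (fun z => ∀ i ∉ I j, z i = x i), μ z)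
            / (∑ z ∈ parts j, μ z)
          ≤ (2 : ℝ) ^ (-(k - δ * b * (I j).card
              - Real.logb 2
                  (1 / ∑ j' ∈ univ.filter (fun j' => j ≤ j'), ∑ z ∈ parts j', μ z)))) := by
  classical
  set c : ℝ := δ * (b : ℝ) with hc
  set supp : Finset (Fin n → Λ) := Finset.univ.filter (fun z => 0 < μ z) with hsupp
  obtain ⟨sp0, sp1, sp2, sp3, sp4⟩ := Stmt10Aux.build_spec μ c hnn supp.card supp le_rfl
  set L := Stmt10Aux.build μ c supp with hL
  refine ⟨L.length, fun j => (L.get j).1, fun j => (L.get j).2.1, fun j => (L.get j).2.2,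
    ?_, ?_, ?_, ?_, ?_⟩
  · -- disjointness
    intro j j' hne
    have hpg := List.pairwise_iff_get.1 sp2
    rcases lt_or_gt_of_ne hne with h | h
    · exact hpg j j' h
    · exact (hpg j' j h).symm
  · -- support cover
    intro z
    have h1 : z ∈ supp ↔ 0 < μ z := by simp [hsupp]
    rw [← h1, sp1 z]
    constructor
    · rintro ⟨e, he, hze⟩
      obtain ⟨i, hi⟩ := List.mem_iff_get.1 he
      exact ⟨i, show z ∈ (L.get i).1 by rw [hi]; exact hze⟩
    · rintro ⟨j, hj⟩
      exact ⟨L.get j, List.get_mem L j, hj⟩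
  · -- fixed coordinates
    intro j z hz i hi
    exact ((sp3 (L.get j) (List.get_mem L j)).2.2.1) z hz i hi
  · -- density
    intro j J hJ x
    have hBpos : 0 < ∑ z ∈ (L.get j).1, μ z := by
      refine Finset.sum_pos (fun z hz => ?_) (sp3 (L.get j) (List.get_mem L j)).1
      have := (sp3 (L.get j) (List.get_mem L j)).2.1 hz
      rw [hsupp] at this
      exact (Finset.mem_filter.1 this).2
    rw [div_le_iff₀ hBpos]
    exact (sp3 (L.get j) (List.get_mem L j)).2.2.2 J hJ x
  · -- min-entropy bound
    intro j k hk x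
    have hmem := List.get_mem L j
    have hBpos : 0 < ∑ z ∈ (L.get j).1, μ z := by
      refine Finset.sum_pos (fun z hz => ?_) (sp3 (L.get j) hmem).1
      have := (sp3 (L.get j) hmem).2.1 hz
      rw [hsupp] at this
      exact (Finset.mem_filter.1 this).2
    set m : ℝ := ((L.get j).2.1.card : ℝ) with hm
    set pr : ℝ := ∑ j' ∈ univ.filter (fun j' => j ≤ j'), ∑ z ∈ (L.get j').1, μ z with hpr
    -- p equals the drop-sum
    have hhead : ((L.drop j.1).head? ) = some (L.get j) := by
      rw [List.drop_eq_getElem_cons j.2]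
      simp [List.get_eq_getElem]
    have htail := sp4 j.1 (L.get j) hhead
    have hpr_eq : pr = ((L.drop j.1).map (fun e => Stmt10Aux.W μ e.1)).sum := by
      rw [hpr, Stmt10Aux.sum_drop, Finset.sum_filter]
      refine Finset.sum_congr rfl (fun i _ => ?_)
      refine if_congr ?_ rfl rfl
      exact Fin.le_def
    have hBge : (2:ℝ) ^ (-(c * m)) * pr ≤ ∑ z ∈ (L.get j).1, μ z := by
      rw [hpr_eq]
      exact htail
    have hprpos : 0 < pr := by
      rw [hpr]
      refine Finset.sum_pos' (fun i _ => Finset.sum_nonneg fun z _ => hnn z) ?_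
      refine ⟨j, Finset.mem_filter.2 ⟨Finset.mem_univ _, le_refl j⟩, hBpos⟩
    -- numerator bound
    set T := (L.get j).1.filter (fun z => ∀ i ∉ (L.get j).2.1, z i = x i) with hT
    have hNle : (∑ z ∈ T, μ z) ≤ (2:ℝ) ^ (-k) := by
      have huniq : ∀ z₁ ∈ T, ∀ z₂ ∈ T, z₁ = z₂ := by
        intro z₁ h₁ z₂ h₂
        rw [hT, Finset.mem_filter] at h₁ h₂
        funext i
        by_cases hi : i ∈ (L.get j).2.1
        · rw [(sp3 (L.get j) hmem).2.2.1 z₁ h₁.1 i hi,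
            (sp3 (L.get j) hmem).2.2.1 z₂ h₂.1 i hi]
        · rw [h₁.2 i hi, h₂.2 i hi]
      rcases T.eq_empty_or_nonempty with h0 | ⟨z₀, hz₀⟩
      · rw [h0, Finset.sum_empty]
        positivity
      · have : T = {z₀} := Finset.eq_singleton_iff_unique_mem.2
          ⟨hz₀, fun w hw => huniq w hw z₀ hz₀⟩
        rw [this, Finset.sum_singleton]
        exact hk z₀
    -- key exponent identity
    have hkey : (2:ℝ) ^ (-(k - c * m - Real.logb 2 (1 / pr))) * ((2:ℝ) ^ (-(c * m)) * pr)
        = (2:ℝ) ^ (-k) := by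
      rw [← mul_assoc, ← Real.rpow_add (by norm_num : (0:ℝ) < 2)]
      have h1 : -(k - c * m - Real.logb 2 (1 / pr)) + -(c * m)
          = -k + Real.logb 2 (1 / pr) := by ring
      rw [h1, Real.rpow_add (by norm_num : (0:ℝ) < 2),
        Real.rpow_logb (by norm_num) (by norm_num) (by positivity), one_div,
        mul_assoc, inv_mul_cancel₀ hprpos.ne', mul_one]
    rw [div_le_iff₀ hBpos]
    calc (∑ z ∈ T, μ z) ≤ (2:ℝ) ^ (-k) := hNle
      _ = (2:ℝ) ^ (-(k - c * m - Real.logb 2 (1 / pr))) * ((2:ℝ) ^ (-(c * m)) * pr) :=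
        hkey.symm
      _ ≤ (2:ℝ) ^ (-(k - c * m - Real.logb 2 (1 / pr))) * (∑ z ∈ (L.get j).1, μ z) :=
        mul_le_mul_of_nonneg_left hBge (Real.rpow_pos_of_pos (by norm_num) _).le
end
end

section
/- (Skewing from dangerous, via Bayes) Let Y be a δ_Y-dense random variable over Λ^n (|Λ|=2^b) and let x ∈ Λ^n be ε-sparsifying but not leaking for Y. Then x is ε-skewing: there exist disjoint non-empty sets I, J ⊆ [n] and y_J ∈ Λ^J such that H_∞(g^I(x_I, Y_I) | Y_J = y_J) < |I| - ε·b·|J| - e_{y_J} + 1, where e_{y_J} ≥ 0 is defined by Pr[Y_J = y_J] = 2^{-δ_Y·b·|J| - e_{y_J}}. -/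
open Finset
open scoped Classical

/-- Skewing from dangerous, via Bayes: if `Y` is `δY`-dense and `x` is `ε`-sparsifying but not
leaking for `Y`, then `x` is `ε`-skewing: for some disjoint non-empty `I, J` and `y_J`,
`H_∞(g^I(x_I,Y_I) | Y_J = y_J) < |I| - ε·b·|J| - e_{y_J} + 1`, where
`e_{y_J} = log₂(1/Pr[Y_J = y_J]) - δY·b·|J|`. -/
theorem stmt_12 (n b : ℕ) {Λ : Type*} [Fintype Λ] [DecidableEq Λ]
    (hcard : Fintype.card Λ = 2 ^ b)
    (g : Λ → Λ → Bool)
    (μ : (Fin n → Λ) → ℝ) (hnn : ∀ z, 0 ≤ μ z) (hsum : ∑ z, μ z = 1)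
    (δY ε : ℝ) (hε : 0 < ε)
    -- `Y` is `δY`-dense
    (hdense : ∀ J : Finset (Fin n), ∀ y : Fin n → Λ,
      ∑ w ∈ univ.filter (fun w => ∀ i ∈ J, w i = y i), μ w
        ≤ (2 : ℝ) ^ (-(δY * b * J.card)))
    (x : Fin n → Λ)
    -- `x` is not leaking for `Y`
    (hnl : ∀ I : Finset (Fin n), ∀ zI : Fin n → Bool,
      (2 : ℝ) ^ (-(I.card : ℝ) - 1)
        ≤ ∑ w ∈ univ.filter (fun w => ∀ i ∈ I, g (x i) (w i) = zI i), μ w)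
    -- `x` is `ε`-sparsifying for `Y`
    (hsp : ∃ I : Finset (Fin n), ∃ zI : Fin n → Bool, ∃ J : Finset (Fin n), Disjoint J I ∧
      ∃ yJ : Fin n → Λ,
        (2 : ℝ) ^ (-((δY - ε) * b * J.card))
          < (∑ w ∈ univ.filter
                (fun w => (∀ i ∈ J, w i = yJ i) ∧ ∀ i ∈ I, g (x i) (w i) = zI i), μ w)
              / (∑ w ∈ univ.filter (fun w => ∀ i ∈ I, g (x i) (w i) = zI i), μ w)) :
    -- `x` is `ε`-skewing
    ∃ I J : Finset (Fin n), Disjoint I J ∧ I.Nonempty ∧ J.Nonempty ∧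
      ∃ yJ : Fin n → Λ, ∃ zI : Fin n → Bool,
        (2 : ℝ) ^ (-((I.card : ℝ) - ε * b * J.card
              - (Real.logb 2 (1 / ∑ w ∈ univ.filter (fun w => ∀ i ∈ J, w i = yJ i), μ w)
                  - δY * b * J.card) + 1))
          < (∑ w ∈ univ.filter
                (fun w => (∀ i ∈ I, g (x i) (w i) = zI i) ∧ ∀ i ∈ J, w i = yJ i), μ w)
              / (∑ w ∈ univ.filter (fun w => ∀ i ∈ J, w i = yJ i), μ w) := by
  obtain ⟨I, zI, J, hdisj, yJ, hratio⟩ := hsp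
  set A := ∑ w ∈ univ.filter (fun w : Fin n → Λ => ∀ i ∈ I, g (x i) (w i) = zI i), μ w with hAdef
  set C := ∑ w ∈ univ.filter (fun w : Fin n → Λ => ∀ i ∈ J, w i = yJ i), μ w with hCdef
  set B := ∑ w ∈ univ.filter
      (fun w : Fin n → Λ => (∀ i ∈ I, g (x i) (w i) = zI i) ∧ ∀ i ∈ J, w i = yJ i), μ w with hBdef
  have hBswap : (∑ w ∈ univ.filter
      (fun w : Fin n → Λ => (∀ i ∈ J, w i = yJ i) ∧ ∀ i ∈ I, g (x i) (w i) = zI i), μ w) = B := by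
    rw [hBdef]
    congr 1
    apply Finset.filter_congr
    intro w _
    constructor <;> (intro h; exact ⟨h.2, h.1⟩)
  rw [hBswap] at hratio
  have hA : (2 : ℝ) ^ (-(I.card : ℝ) - 1) ≤ A := hnl I zI
  have hApos : 0 < A := lt_of_lt_of_le (Real.rpow_pos_of_pos (by norm_num) _) hA
  have hLpos : (0:ℝ) < (2 : ℝ) ^ (-((δY - ε) * b * J.card)) :=
    Real.rpow_pos_of_pos (by norm_num) _
  have hBpos : 0 < B := by
    have h1 : (0:ℝ) < B / A := lt_trans hLpos hratio
    have := mul_pos h1 hApos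
    rwa [div_mul_cancel₀ _ (ne_of_gt hApos)] at this
  have hBleC : B ≤ C := by
    apply Finset.sum_le_sum_of_subset_of_nonneg
    · intro w hw
      simp only [Finset.mem_filter] at *
      exact ⟨hw.1, hw.2.2⟩
    · intro w _ _; exact hnn w
  have hCpos : 0 < C := lt_of_lt_of_le hBpos hBleC
  have hCle : C ≤ (2 : ℝ) ^ (-(δY * b * J.card)) := hdense J yJ
  -- J is nonempty
  have hJne : J.Nonempty := by
    rw [Finset.nonempty_iff_ne_empty]
    intro hJ
    subst hJ
    have hBA : B = A := by
      rw [hBdef, hAdef]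
      congr 1
      apply Finset.filter_congr
      intro w _
      simp
    rw [hBA, div_self (ne_of_gt hApos)] at hratio
    simp at hratio
  -- I is nonempty
  have hIne : I.Nonempty := by
    rw [Finset.nonempty_iff_ne_empty]
    intro hI
    subst hI
    have hA1 : A = 1 := by
      rw [hAdef, ← hsum]
      congr 1
      simp
    have hBC : B = C := by
      rw [hBdef, hCdef]
      congr 1
      apply Finset.filter_congr
      intro w _
      simp
    rw [hA1, div_one, hBC] at hratio
    have hle : (2 : ℝ) ^ (-(δY * b * J.card)) ≤ (2 : ℝ) ^ (-((δY - ε) * b * J.card)) := by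
      apply Real.rpow_le_rpow_of_exponent_le (by norm_num)
      have hJc : (0:ℝ) < J.card := by exact_mod_cast Finset.card_pos.mpr hJne
      have h0 : 0 ≤ ε * b * J.card := by positivity
      have he : (δY - ε) * b * J.card = δY * b * J.card - ε * b * J.card := by ring
      linarith
    linarith
  refine ⟨I, J, hdisj.symm, hIne, hJne, yJ, zI, ?_⟩
  rw [← hCdef, ← hBdef]
  set s := Real.logb 2 (1 / C) with hsdef
  have hC2 : C = (2 : ℝ) ^ (-s) := by
    rw [hsdef, one_div, Real.logb_inv, neg_neg]
    exact (Real.rpow_logb (by norm_num) (by norm_num) hCpos).symm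
  rw [lt_div_iff₀ hCpos]
  have key : (2 : ℝ) ^ (-((I.card : ℝ) - ε * b * J.card - (s - δY * b * J.card) + 1)) * C
      = (2 : ℝ) ^ (-(I.card : ℝ) - 1) * (2 : ℝ) ^ (-((δY - ε) * b * J.card)) := by
    rw [hC2, ← Real.rpow_add (by norm_num), ← Real.rpow_add (by norm_num)]
    ring_nf
  rw [key]
  have h1 : A * (2 : ℝ) ^ (-((δY - ε) * b * J.card)) < B := by
    rw [lt_div_iff₀ hApos] at hratio
    linarith [hratio]
  calc (2 : ℝ) ^ (-(I.card : ℝ) - 1) * (2 : ℝ) ^ (-((δY - ε) * b * J.card))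
      ≤ A * (2 : ℝ) ^ (-((δY - ε) * b * J.card)) := by
        apply mul_le_mul_of_nonneg_right hA (le_of_lt hLpos)
    _ < B := h1
end

section
/- (Non-biasing implies non-leaking) Let Y be a random variable over Λ^n (|Λ| = 2^b, n ≥ 2) and let x ∈ Λ^n be such that for every non-empty S ⊆ [n], bias(g^{⊕S}(x_S, Y_S)) ≤ (1/2)·(2n)^{-|S|}. Then x is not leaking for Y: for every I ⊆ [n] and every z_I ∈ {0,1}^I, Pr[g^I(x_I, Y_I) = z_I] ≥ 2^{-|I|-1}. -/
open Finset
open scoped Classical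

/-- Non-biasing implies non-leaking: if all XOR-biases `bias(g^{⊕S}(x_S, Y_S))` are at most
`(1/2)·(2n)^{-|S|}`, then `Pr[g^I(x_I, Y_I) = z_I] ≥ 2^{-|I|-1}` for all `I, z_I`. -/
theorem stmt_13 (n b : ℕ) (hn : 2 ≤ n) {Λ : Type*} [Fintype Λ] [DecidableEq Λ]
    (hcard : Fintype.card Λ = 2 ^ b)
    (g : Λ → Λ → Bool)
    (μ : (Fin n → Λ) → ℝ) (hnn : ∀ z, 0 ≤ μ z) (hsum : ∑ z, μ z = 1)
    (x : Fin n → Λ)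
    (hb : ∀ S : Finset (Fin n), S.Nonempty →
      |(∑ w ∈ univ.filter (fun w => (S.filter (fun i => g (x i) (w i) = true)).card % 2 = 0), μ w)
          - ∑ w ∈ univ.filter
              (fun w => (S.filter (fun i => g (x i) (w i) = true)).card % 2 = 1), μ w|
        ≤ (1 / 2 : ℝ) * ((2 * n : ℝ)) ^ (-(S.card : ℤ))) :
    ∀ I : Finset (Fin n), ∀ zI : Fin n → Bool,
      (2 : ℝ) ^ (-(I.card : ℝ) - 1)
        ≤ ∑ w ∈ univ.filter (fun w => ∀ i ∈ I, g (x i) (w i) = zI i), μ w := by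
  intro I zI
  have hn0 : (0:ℝ) < (n:ℝ) := by exact_mod_cast lt_of_lt_of_le (by norm_num) hn
  set t : ℝ := (2 * (n:ℝ))⁻¹ with ht
  have ht0 : 0 < t := by positivity
  have ht1 : t ≤ 1/2 := by
    rw [ht]
    rw [inv_le_comm₀ (by positivity) (by norm_num)]
    have : (2:ℝ) ≤ (n:ℝ) := by exact_mod_cast hn
    norm_num
    linarith
  -- the Fourier coefficient E S
  set E : Finset (Fin n) → ℝ := fun S =>
    ∑ w, μ w * (-1:ℝ) ^ (S.filter (fun i => g (x i) (w i) = true)).card with hE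
  set ε : Finset (Fin n) → ℝ := fun S => (-1:ℝ) ^ (S.filter (fun i => zI i = true)).card with hεdef
  have hE0 : E ∅ = 1 := by simp [hE, hsum]
  -- E S equals the bias difference
  have hsplit : ∀ S : Finset (Fin n), E S =
      (∑ w ∈ univ.filter (fun w => (S.filter (fun i => g (x i) (w i) = true)).card % 2 = 0), μ w)
      - ∑ w ∈ univ.filter
          (fun w => (S.filter (fun i => g (x i) (w i) = true)).card % 2 = 1), μ w := by
    intro S
    simp only [hE]
    rw [← Finset.sum_filter_add_sum_filter_not univ
      (fun w => (S.filter (fun i => g (x i) (w i) = true)).card % 2 = 0)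
      (fun w => μ w * (-1:ℝ) ^ (S.filter (fun i => g (x i) (w i) = true)).card)]
    have h1 : ∀ w ∈ univ.filter
        (fun w => (S.filter (fun i => g (x i) (w i) = true)).card % 2 = 0),
        μ w * (-1:ℝ) ^ (S.filter (fun i => g (x i) (w i) = true)).card = μ w := by
      intro w hw
      rw [Finset.mem_filter] at hw
      rw [Even.neg_one_pow (Nat.even_iff.2 hw.2), mul_one]
    have h2 : ∀ w ∈ univ.filter
        (fun w => ¬ ((S.filter (fun i => g (x i) (w i) = true)).card % 2 = 0)),
        μ w * (-1:ℝ) ^ (S.filter (fun i => g (x i) (w i) = true)).card = - μ w := by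
      intro w hw
      rw [Finset.mem_filter] at hw
      rw [Odd.neg_one_pow (Nat.odd_iff.2 (Nat.mod_two_ne_zero.1 hw.2)), mul_neg_one]
    have hfeq : univ.filter
        (fun w : Fin n → Λ => ¬ ((S.filter (fun i => g (x i) (w i) = true)).card % 2 = 0))
        = univ.filter (fun w => (S.filter (fun i => g (x i) (w i) = true)).card % 2 = 1) := by
      apply Finset.filter_congr
      intro w _
      simp [Nat.mod_two_ne_zero]
    rw [Finset.sum_congr rfl h1, Finset.sum_congr hfeq (fun w hw => h2 w (hfeq ▸ hw)),
      Finset.sum_neg_distrib, ← sub_eq_add_neg]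
  have hEbound : ∀ S : Finset (Fin n), S.Nonempty → |E S| ≤ (1/2:ℝ) * t ^ S.card := by
    intro S hS
    have h := hb S hS
    rw [hsplit S]
    have hz : ((2 * (n:ℝ))) ^ (-(S.card : ℤ)) = t ^ S.card := by
      rw [zpow_neg, zpow_natCast, ht, inv_pow]
    rw [hz] at h
    exact h
  -- pointwise Fourier expansion
  have point : ∀ w : Fin n → Λ,
      (2:ℝ) ^ I.card * (if (∀ i ∈ I, g (x i) (w i) = zI i) then (1:ℝ) else 0)
      = ∑ S ∈ I.powerset, ε S * (-1:ℝ) ^ (S.filter (fun i => g (x i) (w i) = true)).card := by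
    intro w
    have hχ : ∀ S : Finset (Fin n),
        ε S * (-1:ℝ) ^ (S.filter (fun i => g (x i) (w i) = true)).card
        = ∏ i ∈ S, ((-1:ℝ) ^ (if zI i = true then 1 else 0)
                    * (-1:ℝ) ^ (if g (x i) (w i) = true then 1 else 0)) := by
      intro S
      rw [Finset.prod_mul_distrib, Finset.prod_pow_eq_pow_sum, Finset.prod_pow_eq_pow_sum,
        ← Finset.card_filter, ← Finset.card_filter]
    calc (2:ℝ) ^ I.card * (if (∀ i ∈ I, g (x i) (w i) = zI i) then (1:ℝ) else 0)
        = ∏ i ∈ I, ((if g (x i) (w i) = zI i then (2:ℝ) else 0)) := by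
          by_cases hall : ∀ i ∈ I, g (x i) (w i) = zI i
          · rw [if_pos hall, mul_one]
            rw [Finset.prod_congr rfl (fun i hi => if_pos (hall i hi)), Finset.prod_const]
          · rw [if_neg hall, mul_zero]
            push_neg at hall
            obtain ⟨i, hi, hne⟩ := hall
            exact (Finset.prod_eq_zero hi
              (show (if g (x i) (w i) = zI i then (2:ℝ) else 0) = 0 from if_neg hne)).symm
      _ = ∏ i ∈ I, (((-1:ℝ) ^ (if zI i = true then 1 else 0)
                    * (-1:ℝ) ^ (if g (x i) (w i) = true then 1 else 0)) + 1) := by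
          apply Finset.prod_congr rfl
          intro i _
          cases hzi : zI i <;> cases hgi : g (x i) (w i) <;> simp [hzi, hgi] <;> norm_num
      _ = ∑ S ∈ I.powerset, ε S * (-1:ℝ) ^ (S.filter (fun i => g (x i) (w i) = true)).card := by
          rw [Finset.prod_add]
          apply Finset.sum_congr rfl
          intro S hS
          rw [hχ S]
          simp
  set P : ℝ := ∑ w ∈ univ.filter (fun w => ∀ i ∈ I, g (x i) (w i) = zI i), μ w with hP
  have main : (2:ℝ) ^ I.card * P = ∑ S ∈ I.powerset, ε S * E S := by
    have h1 : ∑ S ∈ I.powerset, ε S * E S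
        = ∑ w, μ w * ((2:ℝ) ^ I.card * (if (∀ i ∈ I, g (x i) (w i) = zI i) then (1:ℝ) else 0)) := by
      simp_rw [hE, Finset.mul_sum]
      rw [Finset.sum_comm]
      apply Finset.sum_congr rfl
      intro w _
      rw [point w, Finset.mul_sum]
      apply Finset.sum_congr rfl
      intro S _
      ring
    rw [h1, hP, Finset.sum_filter, Finset.mul_sum]
    apply Finset.sum_congr rfl
    intro w _
    by_cases hw : ∀ i ∈ I, g (x i) (w i) = zI i <;> simp [hw] <;> ring
  have hsplitsum : ∑ S ∈ I.powerset, ε S * E S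
      = 1 + ∑ S ∈ (I.powerset).erase ∅, ε S * E S := by
    rw [← Finset.add_sum_erase _ _ (Finset.empty_mem_powerset I)]
    congr 1
    simp [hεdef, hE0]
  -- geometric sum over powerset
  have hgeom : ∑ S ∈ I.powerset, t ^ S.card = (1 + t) ^ I.card := by
    have := Finset.prod_add (fun _ : Fin n => t) (fun _ => (1:ℝ)) I
    simp only [Finset.prod_const, Finset.prod_const_one, one_pow, mul_one] at this
    rw [← this, add_comm]
  have hgeom' : ∑ S ∈ (I.powerset).erase ∅, t ^ S.card = (1 + t) ^ I.card - 1 := by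
    have := Finset.add_sum_erase _ (fun S : Finset (Fin n) => t ^ S.card)
      (Finset.empty_mem_powerset I)
    rw [hgeom] at this
    simp only [Finset.card_empty, pow_zero] at this
    linarith
  -- (1+t)^|I| ≤ 2
  have hIle : I.card ≤ n := by
    have := Finset.card_le_univ I
    simpa using this
  have hpow2 : (1 + t) ^ I.card ≤ 2 := by
    have h1 : (1 + t) ^ I.card ≤ (1 + t) ^ n :=
      pow_le_pow_right₀ (by linarith) hIle
    have hbern : 1 - (n:ℝ) * t ≤ (1 - t) ^ n := by
      have h := one_add_mul_le_pow (a := -t) (by linarith) n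
      rw [show ((1:ℝ) + -t) = 1 - t by ring,
        show (1:ℝ) + (n:ℝ) * -t = 1 - (n:ℝ) * t by ring] at h
      exact h
    have hnt : (n:ℝ) * t = 1/2 := by
      rw [ht]
      field_simp
    have hprod : (1 + t) ^ n * (1 - t) ^ n ≤ 1 := by
      rw [← mul_pow]
      apply pow_le_one₀
      · nlinarith
      · nlinarith
    have hpos : (0:ℝ) < (1 + t) ^ n := by positivity
    nlinarith [hbern, hprod, hpos]
  -- tail bound
  have htail : |∑ S ∈ (I.powerset).erase ∅, ε S * E S| ≤ 1/2 := by
    calc |∑ S ∈ (I.powerset).erase ∅, ε S * E S|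
        ≤ ∑ S ∈ (I.powerset).erase ∅, |ε S * E S| := Finset.abs_sum_le_sum_abs _ _
      _ ≤ ∑ S ∈ (I.powerset).erase ∅, (1/2:ℝ) * t ^ S.card := by
          apply Finset.sum_le_sum
          intro S hS
          have hSne : S.Nonempty := by
            rw [Finset.nonempty_iff_ne_empty]
            exact (Finset.mem_erase.1 hS).1
          rw [abs_mul]
          have hε : |ε S| = 1 := by
            rw [hεdef]
            simp [abs_pow]
          rw [hε, one_mul]
          exact hEbound S hSne
      _ = (1/2:ℝ) * ∑ S ∈ (I.powerset).erase ∅, t ^ S.card := (Finset.mul_sum _ _ _).symm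
      _ ≤ 1/2 := by
          rw [hgeom']
          nlinarith [hpow2]
  have hfinal : (1/2:ℝ) ≤ (2:ℝ) ^ I.card * P := by
    rw [main, hsplitsum]
    have := abs_le.1 htail
    linarith [this.1]
  -- convert the goal exponent
  have hgoal : (2 : ℝ) ^ (-(I.card : ℝ) - 1) = (1/2:ℝ) / (2:ℝ) ^ I.card := by
    rw [show (-(I.card : ℝ) - 1) = -((I.card + 1 : ℕ) : ℝ) by push_cast; ring]
    rw [Real.rpow_neg (by norm_num), Real.rpow_natCast]
    rw [pow_succ]
    field_simp
  rw [hgoal, div_le_iff₀ (by positivity)]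
  calc (1/2:ℝ) ≤ (2:ℝ) ^ I.card * P := hfinal
    _ = P * 2 ^ I.card := by ring
end
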